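/- arXiv:1007.4655 — 6 statements merged into one kernel-verified Lean document; each statement's English description precedes it below -/
import Mathlib

section
/- Let A be a unital C*-algebra, I a closed two-sided ideal of A, and let a_1, …, a_n be pairwise commuting elements of A such that r(a_j) < 1 and ‖π(a_j)‖ ≤ 1 for all j. Then there exists e ∈ I such that 1 + e is invertible in A and ‖(1+e) a_j (1+e)⁻¹‖ ≤ 1 for all j = 1, …, n. -/
open scoped ENNReal

open scoped ENNReal CStarAlgebra ContinuousFunctionalCalculus
set_option maxHeartbeats 1000000

section StmtAux

variable {A : Type*} [CStarAlgebra A] [PartialOrder A] [StarOrderedRing A]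

lemma stmt0_aux_pow_bound {a : A} (ha : spectralRadius ℂ a < 1) :
    ∃ t : ℝ, 0 ≤ t ∧ t < 1 ∧ ∀ᶠ k in Filter.atTop, ‖a ^ k‖ ≤ t ^ k := by
  obtain ⟨t, htr, ht1⟩ := ENNReal.lt_iff_exists_nnreal_btwn.mp ha
  refine ⟨t, t.coe_nonneg, by exact_mod_cast ht1, ?_⟩
  have h := (spectrum.pow_nnnorm_pow_one_div_tendsto_nhds_spectralRadius a).eventually_lt_const htr
  filter_upwards [h, Filter.eventually_ge_atTop 1] with k hk hk1
  have hkne : (k : ℝ) ≠ 0 := by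
    exact_mod_cast Nat.one_le_iff_ne_zero.mp hk1
  have hk0 : (1 / (k : ℝ)) * (k : ℝ) = 1 := by field_simp
  have h2 : ((‖a ^ k‖₊ : ℝ≥0∞) ^ (1 / (k : ℝ))) ^ (k : ℝ) ≤ (t : ℝ≥0∞) ^ (k : ℝ) :=
    ENNReal.rpow_le_rpow hk.le (by positivity)
  rw [← ENNReal.rpow_mul, hk0, ENNReal.rpow_one, ENNReal.rpow_natCast] at h2
  have h3 : ‖a ^ k‖₊ ≤ t ^ k := by
    rw [← ENNReal.coe_pow, ENNReal.coe_le_coe] at h2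
    exact h2
  exact_mod_cast h3

lemma stmt0_aux_summable {a : A} (ha : spectralRadius ℂ a < 1) (x : A) :
    Summable fun k : ℕ => star (a ^ k) * x * a ^ k := by
  obtain ⟨t, ht0, ht1, hev⟩ := stmt0_aux_pow_bound ha
  refine Summable.of_norm_bounded_eventually_nat (g := fun k => ‖x‖ * (t ^ 2) ^ k) ?_ ?_
  · exact (summable_geometric_of_lt_one (by positivity) (by nlinarith)).mul_left _
  · filter_upwards [hev] with k hk
    have h1 := norm_mul_le (star (a ^ k) * x) (a ^ k)
    have h2 := norm_mul_le (star (a ^ k)) x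
    rw [norm_star] at h2
    have hak : (0 : ℝ) ≤ ‖a ^ k‖ := norm_nonneg _
    have hx0 : (0 : ℝ) ≤ ‖x‖ := norm_nonneg _
    have htk : (0 : ℝ) ≤ t ^ k := by positivity
    have h4 : ‖a ^ k‖ * ‖x‖ * ‖a ^ k‖ ≤ t ^ k * ‖x‖ * t ^ k :=
      mul_le_mul (mul_le_mul hk le_rfl hx0 htk) hk hak (by positivity)
    calc ‖star (a ^ k) * x * a ^ k‖ ≤ ‖a ^ k‖ * ‖x‖ * ‖a ^ k‖ := by
          nlinarith [norm_nonneg (star (a ^ k) * x)]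
      _ ≤ t ^ k * ‖x‖ * t ^ k := h4
      _ = ‖x‖ * (t ^ 2) ^ k := by ring

/-- The map `x ↦ ∑' k, (aᵏ)⋆ x aᵏ`. -/
noncomputable def stmt0Gop (a x : A) : A := ∑' k : ℕ, star (a ^ k) * x * a ^ k

lemma stmt0Gop_succ_eq {a : A} (ha : spectralRadius ℂ a < 1) (x : A) :
    ∑' k : ℕ, star (a ^ (k + 1)) * x * a ^ (k + 1) = stmt0Gop a x - x := by
  have hs := stmt0_aux_summable ha x
  have hs1 : Summable fun k : ℕ => star (a ^ (k + 1)) * x * a ^ (k + 1) :=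
    (summable_nat_add_iff 1).mpr hs
  have h0 := tsum_eq_zero_add' (f := fun k : ℕ => star (a ^ k) * x * a ^ k) hs1
  simp only [pow_zero, star_one, one_mul, mul_one] at h0
  rw [stmt0Gop, h0]
  abel

lemma stmt0Gop_shift {a : A} (ha : spectralRadius ℂ a < 1) (x : A) :
    star a * stmt0Gop a x * a = stmt0Gop a x - x := by
  have hs := stmt0_aux_summable ha x
  have hcont : Continuous fun y : A => star a * y * a := by fun_prop
  have hmap := hs.map_tsum
    (((AddMonoidHom.mulRight a).comp (AddMonoidHom.mulLeft (star a)))) hcont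
  have h1 : star a * stmt0Gop a x * a
      = ∑' k : ℕ, star a * (star (a ^ k) * x * a ^ k) * a := hmap
  rw [h1, ← stmt0Gop_succ_eq ha x]
  congr 1
  ext k
  simp only [pow_succ, star_mul, mul_assoc]

lemma stmt0Gop_nonneg {a : A} (x : A) (hx : 0 ≤ x) : 0 ≤ stmt0Gop a x :=
  tsum_nonneg fun k => star_left_conjugate_nonneg hx _

lemma stmt0_le_Gop {a : A} (ha : spectralRadius ℂ a < 1) (x : A) (hx : 0 ≤ x) :
    x ≤ stmt0Gop a x := by
  have h := stmt0Gop_succ_eq ha x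
  have h2 : 0 ≤ stmt0Gop a x - x := h ▸ tsum_nonneg fun k => star_left_conjugate_nonneg hx _
  exact sub_nonneg.mp h2

lemma stmt0Gop_sub {a : A} (ha : spectralRadius ℂ a < 1) (x y : A) :
    stmt0Gop a (x - y) = stmt0Gop a x - stmt0Gop a y := by
  rw [stmt0Gop, stmt0Gop, stmt0Gop, ← Summable.tsum_sub (stmt0_aux_summable ha x) (stmt0_aux_summable ha y)]
  congr 1
  ext k
  simp only [mul_sub, sub_mul]

lemma stmt0Gop_mono {a : A} (ha : spectralRadius ℂ a < 1) {x y : A} (hxy : x ≤ y) :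
    stmt0Gop a x ≤ stmt0Gop a y := by
  have h := stmt0Gop_nonneg (a := a) (y - x) (sub_nonneg.mpr hxy)
  rw [stmt0Gop_sub ha] at h
  exact sub_nonneg.mp h

lemma stmt0Gop_conj {a b : A} (ha : spectralRadius ℂ a < 1) (hab : Commute a b) (x : A) :
    star b * stmt0Gop a x * b = stmt0Gop a (star b * x * b) := by
  have hs := stmt0_aux_summable ha x
  have hcont : Continuous fun y : A => star b * y * b := by fun_prop
  have hmap := hs.map_tsum
    (((AddMonoidHom.mulRight b).comp (AddMonoidHom.mulLeft (star b)))) hcont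
  have h1 : star b * stmt0Gop a x * b
      = ∑' k : ℕ, star b * (star (a ^ k) * x * a ^ k) * b := hmap
  rw [h1, stmt0Gop]
  congr 1
  ext k
  have h2 : a ^ k * b = b * a ^ k := (hab.pow_left k).eq
  have h3 : star b * star (a ^ k) = star (a ^ k) * star b := by
    rw [← star_mul, ← star_mul, h2]
  calc star b * (star (a ^ k) * x * a ^ k) * b
      = star b * star (a ^ k) * x * (a ^ k * b) := by simp only [mul_assoc]
    _ = star (a ^ k) * star b * x * (b * a ^ k) := by rw [h2, h3]
    _ = star (a ^ k) * (star b * x * b) * a ^ k := by simp only [mul_assoc]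

lemma stmt0Gop_ker {B : Type*} [CStarAlgebra B]
    (π : A →⋆ₐ[ℂ] B) {a : A} (ha : spectralRadius ℂ a < 1) {x : A} (hx : π x = 0) :
    π (stmt0Gop a x) = 0 := by
  have hs := stmt0_aux_summable (A := A) ha x
  rw [stmt0Gop, hs.map_tsum π (map_continuous π)]
  simp [map_mul, hx]

end StmtAux

/- STATEMENT 0: Let `A` be a unital C*-algebra, `I` a closed two-sided ideal of `A`, and
`a_1, …, a_n` pairwise commuting elements of `A` with `r(a_j) < 1` and `‖π(a_j)‖ ≤ 1` for
all `j`.  Then there is `e ∈ I` with `1 + e` invertible and `‖(1+e) a_j (1+e)⁻¹‖ ≤ 1` for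
all `j`.

The quotient C*-algebra `A/I` together with the canonical surjection `π : A → A/I` is
formalized as a surjective star algebra homomorphism `π : A →⋆ₐ[ℂ] B` onto a C*-algebra
`B`; the ideal `I` is then the kernel of `π`, so `e ∈ I` is expressed as `π e = 0`. -/
theorem stmt_0
    {A : Type*} [NormedRing A] [StarRing A] [CStarRing A] [CompleteSpace A]
    [NormedAlgebra ℂ A] [StarModule ℂ A]
    {B : Type*} [NormedRing B] [StarRing B] [CStarRing B] [CompleteSpace B]
    [NormedAlgebra ℂ B] [StarModule ℂ B]
    (π : A →⋆ₐ[ℂ] B) (hπ : Function.Surjective π)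
    (n : ℕ) (a : Fin n → A)
    (hcomm : ∀ i j, Commute (a i) (a j))
    (hr : ∀ j, spectralRadius ℂ (a j) < 1)
    (hq : ∀ j, ‖π (a j)‖ ≤ 1) :
    ∃ e : A, π e = 0 ∧ ∃ u : Aˣ, (u : A) = 1 + e ∧
      ∀ j, ‖(u : A) * a j * ((u⁻¹ : Aˣ) : A)‖ ≤ 1 := by
  letI : CStarAlgebra A := { }
  letI : CStarAlgebra B := { }
  letI := CStarAlgebra.spectralOrder A
  letI := CStarAlgebra.spectralOrderedRing A
  classical
  -- the positive parts of `(a j)⋆ (a j) - 1`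
  have hysa : ∀ j, IsSelfAdjoint (star (a j) * a j - 1) := fun j =>
    (IsSelfAdjoint.star_mul_self (a j)).sub (IsSelfAdjoint.one A)
  set h : Fin n → A := fun j => cfc (fun t : ℝ => max t 0) (star (a j) * a j - 1) with hhdef
  have hh0 : ∀ j, 0 ≤ h j := fun j => cfc_nonneg (fun t _ => le_max_right t 0)
  have hyh : ∀ j, star (a j) * a j - 1 ≤ h j := by
    intro j
    conv_lhs => rw [← cfc_id ℝ (star (a j) * a j - 1) (hysa j)]
    exact cfc_mono (fun t _ => le_max_left t 0)
  have hhπ : ∀ j, π (h j) = 0 := by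
    intro j
    have hmap : π (h j) = cfc (fun t : ℝ => max t 0) (π (star (a j) * a j - 1)) :=
      StarAlgHom.map_cfc π _ _ (by fun_prop) (map_continuous π) (hysa j) ((hysa j).map π)
    rw [hhdef, hmap]
    rcases subsingleton_or_nontrivial B with hB | hB
    · exact Subsingleton.elim _ _
    have hspec : ∀ t ∈ spectrum ℝ (π (star (a j) * a j - 1)), max t 0 = 0 := by
      intro t ht
      have hπy : π (star (a j) * a j - 1)
          = star (π (a j)) * π (a j) - algebraMap ℝ B 1 := by
        simp [map_sub, map_mul, map_star]
      rw [hπy, ← spectrum.sub_singleton_eq] at ht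
      obtain ⟨w, hw, v, hv, hwv⟩ := Set.mem_sub.mp ht
      rw [Set.mem_singleton_iff] at hv
      subst hv
      have hwb : ‖w‖ ≤ ‖star (π (a j)) * π (a j)‖ := spectrum.norm_le_norm_of_mem hw
      have hb2 : ‖star (π (a j)) * π (a j)‖ ≤ 1 := by
        rw [CStarRing.norm_star_mul_self]
        have := hq j
        nlinarith [norm_nonneg (π (a j))]
      have hw1 : w ≤ 1 := le_trans (le_abs_self w) (by simpa [Real.norm_eq_abs] using hwb.trans hb2)
      have ht0 : t ≤ 0 := by rw [← hwv]; linarith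
      exact max_eq_right ht0
    rw [cfc_congr hspec, cfc_const 0 _ ((hysa j).map π)]
    simp
  -- the total positive kernel element
  set htot : A := ∑ j, h j with htotdef
  have htot0 : 0 ≤ htot := Finset.sum_nonneg fun j _ => hh0 j
  have htotπ : π htot = 0 := by
    rw [htotdef, map_sum]
    exact Finset.sum_eq_zero fun j _ => hhπ j
  have hjtot : ∀ j, h j ≤ htot := fun j =>
    Finset.single_le_sum (fun i _ => hh0 i) (Finset.mem_univ j)
  -- main induction producing the simultaneous majorant
  have key : ∀ s : Finset (Fin n), ∃ H : A, 0 ≤ H ∧ π H = 0 ∧ htot ≤ H ∧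
      ∀ j ∈ s, star (a j) * H * a j + htot ≤ H := by
    intro s
    induction s using Finset.induction_on with
    | empty => exact ⟨htot, htot0, htotπ, le_rfl, by simp⟩
    | @insert i s his ih =>
      obtain ⟨H, hH0, hHπ, hhH, hs⟩ := ih
      refine ⟨stmt0Gop (a i) H, stmt0Gop_nonneg H hH0, stmt0Gop_ker π (hr i) hHπ,
        le_trans hhH (stmt0_le_Gop (hr i) H hH0), ?_⟩
      intro j hj
      rcases Finset.mem_insert.mp hj with hji | hjs
      · subst hji
        rw [stmt0Gop_shift (hr j) H]
        calc stmt0Gop (a j) H - H + htot ≤ stmt0Gop (a j) H - H + H :=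
              add_le_add_right (le_trans hhH le_rfl) _
          _ = stmt0Gop (a j) H := by abel
      · have hconj := stmt0Gop_conj (hr i) (hcomm i j) H
        have hstep : star (a j) * H * a j ≤ H - htot := le_sub_iff_add_le.mpr (hs j hjs)
        calc star (a j) * stmt0Gop (a i) H * a j + htot
            = stmt0Gop (a i) (star (a j) * H * a j) + htot := by rw [hconj]
          _ ≤ stmt0Gop (a i) (H - htot) + htot :=
              add_le_add_left (stmt0Gop_mono (hr i) hstep) htot
          _ = stmt0Gop (a i) H - stmt0Gop (a i) htot + htot := by rw [stmt0Gop_sub (hr i)]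
          _ ≤ stmt0Gop (a i) H - htot + htot :=
              add_le_add_left (sub_le_sub_left (stmt0_le_Gop (hr i) htot htot0) _) htot
          _ = stmt0Gop (a i) H := by abel
  obtain ⟨H, hH0, hHπ, hhH, hkey⟩ := key Finset.univ
  have h01 : (0 : A) ≤ 1 := by simpa using star_mul_self_nonneg (1 : A)
  have hT0 : (0 : A) ≤ 1 + H := add_nonneg h01 hH0
  have hTsa : IsSelfAdjoint (1 + H) := .of_nonneg hT0
  have hTπ : π (1 + H) = 1 := by simp [hHπ]
  -- the conjugation inequality
  have hconjT : ∀ j, star (a j) * (1 + H) * a j ≤ 1 + H := by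
    intro j
    have h1 : star (a j) * (1 + H) * a j = star (a j) * a j + star (a j) * H * a j := by
      rw [mul_add, add_mul, mul_one]
    rw [h1]
    have h2 : star (a j) * a j ≤ 1 + h j := sub_le_iff_le_add'.mp (hyh j)
    have h3 : star (a j) * H * a j ≤ H - htot :=
      le_sub_iff_add_le.mpr (hkey j (Finset.mem_univ j))
    calc star (a j) * a j + star (a j) * H * a j ≤ (1 + h j) + (H - htot) := add_le_add h2 h3
      _ ≤ (1 + htot) + (H - htot) := add_le_add_left (add_le_add_right (hjtot j) 1) _
      _ = 1 + H := by abel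
  -- `1 + H` is invertible
  have hTunit : IsUnit (1 + H) := by
    have hmem : (-1 : ℝ) ∉ spectrum ℝ H := by
      intro hmem
      have := spectrum_nonneg_of_nonneg hH0 hmem
      norm_num at this
    have hUnit := spectrum.notMem_iff.mp hmem
    have heq : -(algebraMap ℝ A (-1) - H) = 1 + H := by
      rw [map_neg, map_one]
      abel
    exact heq ▸ hUnit.neg
  -- the square root
  set S := cfc (fun t : ℝ => Real.sqrt t) (1 + H) with hSdef
  have hS0 : 0 ≤ S := cfc_nonneg (fun t _ => Real.sqrt_nonneg t)
  have hSsa : IsSelfAdjoint S := .of_nonneg hS0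
  have hSS : S * S = 1 + H := by
    rw [hSdef, ← cfc_mul _ _ (1 + H) (by fun_prop) (by fun_prop)]
    have hcg : ∀ t ∈ spectrum ℝ (1 + H), Real.sqrt t * Real.sqrt t = t := fun t ht =>
      Real.mul_self_sqrt (spectrum_nonneg_of_nonneg hT0 ht)
    rw [cfc_congr hcg]
    exact cfc_id' ℝ (1 + H) hTsa
  have hSπ : π S = 1 := by
    have hmap : π S = cfc (fun t : ℝ => Real.sqrt t) (π (1 + H)) :=
      StarAlgHom.map_cfc π _ _ (by fun_prop) (map_continuous π) hTsa (hTsa.map π)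
    rw [hmap, hTπ, ← map_one (algebraMap ℝ B), cfc_algebraMap]
    simp
  obtain ⟨v, hv⟩ := hTunit
  have hSv : Commute S (v : A) := by
    rw [hv, ← hSS]
    exact (Commute.refl S).mul_right (Commute.refl S)
  have hSvinv : Commute S ((v⁻¹ : Aˣ) : A) := hSv.units_inv_right
  have hmul1 : S * (((v⁻¹ : Aˣ) : A) * S) = 1 := by
    calc S * (((v⁻¹ : Aˣ) : A) * S) = S * (S * ((v⁻¹ : Aˣ) : A)) := by rw [hSvinv.eq]
      _ = (S * S) * ((v⁻¹ : Aˣ) : A) := by rw [mul_assoc]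
      _ = (v : A) * ((v⁻¹ : Aˣ) : A) := by rw [hSS, hv]
      _ = 1 := v.mul_inv
  have hmul2 : (((v⁻¹ : Aˣ) : A) * S) * S = 1 := by
    calc (((v⁻¹ : Aˣ) : A) * S) * S = ((v⁻¹ : Aˣ) : A) * (S * S) := by rw [mul_assoc]
      _ = ((v⁻¹ : Aˣ) : A) * (v : A) := by rw [hSS, hv]
      _ = 1 := v.inv_mul
  have hSinvsa : star (((v⁻¹ : Aˣ) : A) * S) = ((v⁻¹ : Aˣ) : A) * S := by
    have h1 : star (((v⁻¹ : Aˣ) : A) * S) * S = 1 := by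
      have h2 := congrArg star hmul1
      rwa [star_mul, hSsa.star_eq, star_one] at h2
    calc star (((v⁻¹ : Aˣ) : A) * S)
        = star (((v⁻¹ : Aˣ) : A) * S) * (S * (((v⁻¹ : Aˣ) : A) * S)) := by
          rw [hmul1, mul_one]
      _ = (star (((v⁻¹ : Aˣ) : A) * S) * S) * (((v⁻¹ : Aˣ) : A) * S) := by rw [mul_assoc]
      _ = ((v⁻¹ : Aˣ) : A) * S := by rw [h1, one_mul]
  set Sinv : A := ((v⁻¹ : Aˣ) : A) * S with hSinvdef
  clear_value Sinv
  have h6 : Sinv * (1 + H) * Sinv = 1 := by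
    rw [← hSS]
    calc Sinv * (S * S) * Sinv = (Sinv * S) * (S * Sinv) := by simp only [mul_assoc]
      _ = 1 := by rw [hmul2, hmul1, one_mul]
  refine ⟨S - 1, by rw [map_sub, hSπ, map_one, sub_self], ⟨S, Sinv, hmul1, hmul2⟩,
    by simp, ?_⟩
  intro j
  show ‖S * a j * Sinv‖ ≤ 1
  have hstar : star (S * a j * Sinv) = Sinv * (star (a j) * S) := by
    rw [star_mul, star_mul, hSsa.star_eq, hSinvsa]
  have hle : star (S * a j * Sinv) * (S * a j * Sinv) ≤ 1 := by
    calc star (S * a j * Sinv) * (S * a j * Sinv)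
        = Sinv * (star (a j) * (1 + H) * a j) * Sinv := by
          rw [hstar, ← hSS]
          simp only [mul_assoc]
      _ ≤ Sinv * (1 + H) * Sinv := by
          have h5 := star_left_conjugate_le_conjugate (hconjT j) Sinv
          rwa [hSinvsa] at h5
      _ = 1 := h6
  have hnorm : ‖star (S * a j * Sinv) * (S * a j * Sinv)‖ ≤ 1 := by
    have h7 := CStarAlgebra.norm_le_norm_of_nonneg_of_le
      (star_mul_self_nonneg (S * a j * Sinv)) hle
    have h8 : ‖(1 : A)‖ ≤ 1 := by
      rcases subsingleton_or_nontrivial A with hA | hA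
      · rw [Subsingleton.elim (1 : A) 0, norm_zero]; norm_num
      · rw [norm_one]
    exact h7.trans h8
  have h9 : ‖S * a j * Sinv‖ * ‖S * a j * Sinv‖ ≤ 1 := by
    rwa [← CStarRing.norm_star_mul_self]
  nlinarith [norm_nonneg (S * a j * Sinv)]
end

section
/- Let A be a unital C*-algebra, I a closed two-sided ideal of A, and let a_1, …, a_n be pairwise commuting elements of A. Then for every ε > 0 there exists e ∈ I such that 1 + e is invertible in A and, for every j = 1, …, n, max{r(a_j), ‖π(a_j)‖} ≤ ‖(1+e) a_j (1+e)⁻¹‖ ≤ max{r(a_j), ‖π(a_j)‖} + ε. -/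
open scoped ENNReal
open Filter

section Helpers

lemma eventually_pow_norm_le' {A : Type*} [NormedRing A] [NormedAlgebra ℂ A]
    [CompleteSpace A] (x : A) {t : ℝ} (ht : 0 ≤ t)
    (hx : spectralRadius ℂ x < ENNReal.ofReal t) :
    ∀ᶠ m in atTop, ‖x ^ m‖ ≤ t ^ m := by
  have h := spectrum.pow_nnnorm_pow_one_div_tendsto_nhds_spectralRadius x
  filter_upwards [h.eventually_lt_const hx, eventually_ge_atTop 1] with m hm hm1
  have hm0 : (m : ℝ) ≠ 0 := Nat.cast_ne_zero.mpr (by omega)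
  have h2 := ENNReal.rpow_le_rpow hm.le (Nat.cast_nonneg m)
  have e1 : ((‖x ^ m‖₊ : ℝ≥0∞) ^ (1 / (m : ℝ))) ^ (m : ℝ) = (‖x ^ m‖₊ : ℝ≥0∞) := by
    rw [← ENNReal.rpow_mul, one_div, inv_mul_cancel₀ hm0, ENNReal.rpow_one]
  have e2 : (ENNReal.ofReal t) ^ (m : ℝ) = ENNReal.ofReal (t ^ m) := by
    rw [ENNReal.rpow_natCast, ← ENNReal.ofReal_pow ht]
  rw [e1, e2, ← enorm_eq_nnnorm, ← ofReal_norm] at h2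
  exact (ENNReal.ofReal_le_ofReal_iff (by positivity)).mp h2

lemma summable_sq_of_eventually_le' {f : ℕ → ℝ} (hf : ∀ m, 0 ≤ f m) {q : ℝ} (hq0 : 0 ≤ q)
    (hq1 : q < 1) (h : ∀ᶠ m in atTop, f m ≤ q ^ m) :
    Summable fun m : ℕ => f m * f m := by
  obtain ⟨N, hN⟩ := eventually_atTop.mp h
  rw [← summable_nat_add_iff N]
  have hgeo : Summable fun m : ℕ => (q * q) ^ N * (q * q) ^ m :=
    (summable_geometric_of_lt_one (mul_nonneg hq0 hq0) (by nlinarith)).mul_left _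
  refine Summable.of_nonneg_of_le (fun m => mul_nonneg (hf _) (hf _)) (fun m => ?_) hgeo
  have h1 : f (m + N) ≤ q ^ (m + N) := hN _ (by omega)
  calc f (m + N) * f (m + N) ≤ q ^ (m + N) * q ^ (m + N) :=
        mul_le_mul h1 h1 (hf _) (by positivity)
    _ = (q * q) ^ N * (q * q) ^ m := by rw [← mul_pow, pow_add]; ring

end Helpers

section PhiAux

variable {A B : Type*} [CStarAlgebra A] [PartialOrder A] [StarOrderedRing A]
  [CStarAlgebra B] [PartialOrder B] [StarOrderedRing B]

/-- The map `x ↦ ∑' m, (c^m)* x c^m`. -/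
noncomputable def phiSum (c x : A) : A := ∑' m : ℕ, star (c ^ m) * x * c ^ m

lemma phiSum_summable {c : A} (hc : Summable fun m : ℕ => ‖c ^ m‖ * ‖c ^ m‖) (x : A) :
    Summable fun m : ℕ => star (c ^ m) * x * c ^ m := by
  refine Summable.of_norm <| Summable.of_nonneg_of_le (fun m => norm_nonneg _) (fun m => ?_)
    (hc.mul_right ‖x‖)
  calc ‖star (c ^ m) * x * c ^ m‖ ≤ ‖star (c ^ m) * x‖ * ‖c ^ m‖ := norm_mul_le _ _
    _ ≤ ‖star (c ^ m)‖ * ‖x‖ * ‖c ^ m‖ := by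
        gcongr
        exact norm_mul_le _ _
    _ = ‖c ^ m‖ * ‖c ^ m‖ * ‖x‖ := by rw [norm_star]; ring

lemma phiSum_nonneg {c x : A} (hx : 0 ≤ x) : 0 ≤ phiSum c x :=
  tsum_nonneg fun m => star_left_conjugate_nonneg hx _

lemma phiSum_eq {c : A} (hc : Summable fun m : ℕ => ‖c ^ m‖ * ‖c ^ m‖) (x : A) :
    phiSum c x = x + star c * phiSum c x * c := by
  have hs := phiSum_summable hc x
  have h1 : ∀ m : ℕ, star (c ^ (m + 1)) * x * c ^ (m + 1)
      = star c * (star (c ^ m) * x * c ^ m) * c := by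
    intro m
    rw [pow_succ, star_mul]
    simp only [mul_assoc]
  calc phiSum c x = star ((c : A) ^ 0) * x * c ^ 0
        + ∑' m : ℕ, star (c ^ (m + 1)) * x * c ^ (m + 1) := hs.tsum_eq_zero_add
    _ = x + star c * phiSum c x * c := by
        rw [pow_zero, star_one, one_mul, mul_one]
        congr 1
        rw [tsum_congr h1, (hs.mul_left (star c)).tsum_mul_right c, hs.tsum_mul_left (star c)]; rfl

lemma phiSum_sub {c : A} (hc : Summable fun m : ℕ => ‖c ^ m‖ * ‖c ^ m‖) (x y : A) :
    phiSum c (x - y) = phiSum c x - phiSum c y := by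
  rw [phiSum, phiSum, phiSum, ← Summable.tsum_sub (phiSum_summable hc x) (phiSum_summable hc y)]
  exact tsum_congr fun m => by simp only [mul_sub, sub_mul]

lemma phiSum_mono {c x y : A} (hc : Summable fun m : ℕ => ‖c ^ m‖ * ‖c ^ m‖) (h : x ≤ y) :
    phiSum c x ≤ phiSum c y := by
  rw [← sub_nonneg, ← phiSum_sub hc]
  exact phiSum_nonneg (sub_nonneg.mpr h)

lemma le_phiSum {c x : A} (hc : Summable fun m : ℕ => ‖c ^ m‖ * ‖c ^ m‖) (hx : 0 ≤ x) :
    x ≤ phiSum c x := by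
  rw [phiSum_eq hc x]
  exact le_add_of_nonneg_right (star_left_conjugate_nonneg (phiSum_nonneg hx) c)

lemma phiSum_conj {c d : A} (hc : Summable fun m : ℕ => ‖c ^ m‖ * ‖c ^ m‖)
    (hcd : Commute c d) (x : A) :
    star d * phiSum c x * d = phiSum c (star d * x * d) := by
  have hs := phiSum_summable hc x
  calc star d * phiSum c x * d
      = ∑' m : ℕ, star d * (star (c ^ m) * x * c ^ m) * d := by
        rw [phiSum, ← hs.tsum_mul_left (star d), ← (hs.mul_left (star d)).tsum_mul_right d]
    _ = ∑' m : ℕ, star (c ^ m) * (star d * x * d) * c ^ m := by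
        refine tsum_congr fun m => ?_
        have h1 : c ^ m * d = d * c ^ m := (hcd.pow_left m).eq
        have h2 : star d * star (c ^ m) = star (c ^ m) * star d :=
          ((hcd.pow_left m).star_star).symm.eq
        calc star d * (star (c ^ m) * x * c ^ m) * d
            = star d * star (c ^ m) * x * (c ^ m * d) := by simp only [mul_assoc]
          _ = star (c ^ m) * star d * x * (d * c ^ m) := by rw [h1, h2]
          _ = star (c ^ m) * (star d * x * d) * c ^ m := by simp only [mul_assoc]
    _ = phiSum c (star d * x * d) := rfl

lemma phiSum_pi_zero (π : A →⋆ₐ[ℂ] B) (hπ : Continuous π) {c x : A}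
    (hc : Summable fun m : ℕ => ‖c ^ m‖ * ‖c ^ m‖) (hx : π x = 0) :
    π (phiSum c x) = 0 := by
  have hz : HasSum (fun m : ℕ => π (star (c ^ m) * x * c ^ m)) (π (phiSum c x)) :=
    (phiSum_summable hc x).hasSum.map π hπ
  have h0 : HasSum (fun _ : ℕ => (0 : B)) (π (phiSum c x)) := by
    simpa [map_mul, hx] using hz
  simpa using h0.unique hasSum_zero

end PhiAux

theorem stmt_1
    {A : Type*} [NormedRing A] [StarRing A] [CStarRing A] [CompleteSpace A]
    [NormedAlgebra ℂ A] [StarModule ℂ A]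
    {B : Type*} [NormedRing B] [StarRing B] [CStarRing B] [CompleteSpace B]
    [NormedAlgebra ℂ B] [StarModule ℂ B]
    (π : A →⋆ₐ[ℂ] B) (hπ : Function.Surjective π)
    (n : ℕ) (a : Fin n → A)
    (hcomm : ∀ i j, Commute (a i) (a j))
    (ε : ℝ) (hε : 0 < ε) :
    ∃ e : A, π e = 0 ∧ ∃ u : Aˣ, (u : A) = 1 + e ∧
      ∀ j, max (spectralRadius ℂ (a j)) (‖π (a j)‖₊ : ℝ≥0∞)
              ≤ (‖(u : A) * a j * ((u⁻¹ : Aˣ) : A)‖₊ : ℝ≥0∞) ∧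
           (‖(u : A) * a j * ((u⁻¹ : Aˣ) : A)‖₊ : ℝ≥0∞)
              ≤ max (spectralRadius ℂ (a j)) (‖π (a j)‖₊ : ℝ≥0∞) + ENNReal.ofReal ε := by
  classical
  rcases subsingleton_or_nontrivial A with hA | hA
  · refine ⟨0, map_zero π, 1, by simp, fun j => ?_⟩
    have ha0 : a j = 0 := Subsingleton.elim _ _
    constructor
    · simp [ha0]
    · exact le_trans (by simp [ha0]) zero_le
  
  -- Set up C*-algebra and order structure
  letI instA : CStarAlgebra A := { }
  letI instB : CStarAlgebra B := { }
  letI : PartialOrder A := CStarAlgebra.spectralOrder A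
  letI : StarOrderedRing A := CStarAlgebra.spectralOrderedRing A
  letI : PartialOrder B := CStarAlgebra.spectralOrder B
  letI : StarOrderedRing B := CStarAlgebra.spectralOrderedRing B
  have hπcont : Continuous π :=
    AddMonoidHomClass.continuous_of_bound π 1 fun x => by
      simpa [one_mul] using NonUnitalStarAlgHom.norm_apply_le π x
  -- selfadjointness and monotonicity of real scalars
  have halg_saA : ∀ r : ℝ, IsSelfAdjoint (algebraMap ℝ A r) := fun r => by
    rw [IsScalarTower.algebraMap_apply ℝ ℂ A]
    exact IsSelfAdjoint.algebraMap A (by simp [IsSelfAdjoint, Complex.star_def,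
      Complex.conj_ofReal])
  have halg_saB : ∀ r : ℝ, IsSelfAdjoint (algebraMap ℝ B r) := fun r => by
    rw [IsScalarTower.algebraMap_apply ℝ ℂ B]
    exact IsSelfAdjoint.algebraMap B (by simp [IsSelfAdjoint, Complex.star_def,
      Complex.conj_ofReal])
  have halg_monoA : ∀ {r s : ℝ}, r ≤ s → algebraMap ℝ A r ≤ algebraMap ℝ A s := by
    intro r s h
    rw [← sub_nonneg, ← map_sub]
    have h2 : algebraMap ℝ A (s - r)
        = star (algebraMap ℝ A (Real.sqrt (s - r))) * algebraMap ℝ A (Real.sqrt (s - r)) := by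
      rw [(halg_saA _).star_eq, ← map_mul, Real.mul_self_sqrt (by linarith)]
    rw [h2]
    exact star_mul_self_nonneg _
  have halg_monoB : ∀ {r s : ℝ}, r ≤ s → algebraMap ℝ B r ≤ algebraMap ℝ B s := by
    intro r s h
    rw [← sub_nonneg, ← map_sub]
    have h2 : algebraMap ℝ B (s - r)
        = star (algebraMap ℝ B (Real.sqrt (s - r))) * algebraMap ℝ B (Real.sqrt (s - r)) := by
      rw [(halg_saB _).star_eq, ← map_mul, Real.mul_self_sqrt (by linarith)]
    rw [h2]
    exact star_mul_self_nonneg _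
  have hπalg : ∀ r : ℝ, π (algebraMap ℝ A r) = algebraMap ℝ B r := fun r => by
    rw [IsScalarTower.algebraMap_apply ℝ ℂ A, IsScalarTower.algebraMap_apply ℝ ℂ B,
      AlgHomClass.commutes]
  have hπpos : ∀ {x : A}, 0 ≤ x → 0 ≤ π x := by
    intro x hx
    have h1 : x = star (CFC.sqrt x) * CFC.sqrt x := by
      rw [(IsSelfAdjoint.of_nonneg (CFC.sqrt_nonneg x)).star_eq, CFC.sqrt_mul_sqrt_self x hx]
    rw [h1, map_mul, map_star]
    exact star_mul_self_nonneg _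
  have hunit_one_addA : ∀ {z : A}, 0 ≤ z → IsUnit (1 + z) := by
    intro z hz
    have h1 : (-1 : ℝ) ∉ spectrum ℝ z := fun h => by
      have := spectrum_nonneg_of_nonneg hz h; linarith
    have h2 := spectrum.notMem_iff.mp h1
    rw [map_neg, map_one] at h2
    have h3 : (-1 : A) - z = -(1 + z) := by abel
    rw [h3] at h2
    exact (IsUnit.neg_iff _).mp h2
  have hunit_one_addB : ∀ {z : B}, 0 ≤ z → IsUnit (1 + z) := by
    intro z hz
    have h1 : (-1 : ℝ) ∉ spectrum ℝ z := fun h => by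
      have := spectrum_nonneg_of_nonneg hz h; linarith
    have h2 := spectrum.notMem_iff.mp h1
    rw [map_neg, map_one] at h2
    have h3 : (-1 : B) - z = -(1 + z) := by abel
    rw [h3] at h2
    exact (IsUnit.neg_iff _).mp h2
  -- data
  set M : Fin n → ℝ := fun j => max (spectralRadius ℂ (a j)).toReal ‖π (a j)‖ with hMdef
  have hM0 : ∀ j, 0 ≤ M j := fun j => le_max_of_le_right (norm_nonneg _)
  have hρpos : ∀ j, 0 < M j + ε := fun j => add_pos_of_nonneg_of_pos (hM0 j) hε
  set c : Fin n → A := fun j => (((M j + ε)⁻¹ : ℝ) : ℂ) • a j with hcdef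
  have hca : ∀ j, a j = (((M j + ε) : ℝ) : ℂ) • c j := fun j => by
    rw [hcdef]
    simp only
    rw [smul_smul, ← Complex.ofReal_mul, mul_inv_cancel₀ (hρpos j).ne',
      Complex.ofReal_one, one_smul]
  have hcomm' : ∀ i j, Commute (c i) (c j) := fun i j =>
    ((hcomm i j).smul_left _).smul_right _
  have hrfin : ∀ j, spectralRadius ℂ (a j) ≠ ⊤ := fun j =>
    ((spectrum.spectralRadius_le_nnnorm (a j)).trans_lt ENNReal.coe_lt_top).ne
  -- summability of powers of the c j
  have hsum : ∀ j, Summable fun m : ℕ => ‖c j ^ m‖ * ‖c j ^ m‖ := by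
    intro j
    have ht0 : (0 : ℝ) ≤ M j + ε / 2 := by linarith [hM0 j]
    have hrlt : spectralRadius ℂ (a j) < ENNReal.ofReal (M j + ε / 2) := by
      calc spectralRadius ℂ (a j) = ENNReal.ofReal (spectralRadius ℂ (a j)).toReal :=
            (ENNReal.ofReal_toReal (hrfin j)).symm
        _ ≤ ENNReal.ofReal (M j) := ENNReal.ofReal_le_ofReal (le_max_left _ _)
        _ < ENNReal.ofReal (M j + ε / 2) := by
            rw [ENNReal.ofReal_lt_ofReal_iff (by linarith [hM0 j])]; linarith
    have hev := eventually_pow_norm_le' (a j) ht0 hrlt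
    have hq0 : 0 ≤ (M j + ε / 2) / (M j + ε) := div_nonneg ht0 (hρpos j).le
    have hq1 : (M j + ε / 2) / (M j + ε) < 1 := (div_lt_one (hρpos j)).mpr (by linarith)
    refine summable_sq_of_eventually_le' (fun m => norm_nonneg _) hq0 hq1 ?_
    filter_upwards [hev] with m hm
    have hpow : c j ^ m = ((((M j + ε))⁻¹ : ℝ) : ℂ) ^ m • a j ^ m := by
      rw [hcdef]; simp only; rw [smul_pow]
    rw [hpow, norm_smul, norm_pow, Complex.norm_real, Real.norm_eq_abs,
      abs_of_nonneg (inv_nonneg.mpr (hρpos j).le)]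
    calc ((M j + ε)⁻¹) ^ m * ‖a j ^ m‖ ≤ ((M j + ε)⁻¹) ^ m * (M j + ε / 2) ^ m :=
          mul_le_mul_of_nonneg_left hm (by positivity)
      _ = ((M j + ε / 2) / (M j + ε)) ^ m := by
          rw [div_pow]; ring
  -- quotient norms of the c j
  have hπcnorm : ∀ j, ‖π (c j)‖ < 1 := by
    intro j
    have h1 : π (c j) = (((M j + ε)⁻¹ : ℝ) : ℂ) • π (a j) := by
      rw [hcdef]; simp only; rw [map_smul]
    rw [h1, norm_smul, Complex.norm_real, Real.norm_eq_abs,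
      abs_of_nonneg (inv_nonneg.mpr (hρpos j).le)]
    have h2 : ‖π (a j)‖ ≤ M j := le_max_right _ _
    calc (M j + ε)⁻¹ * ‖π (a j)‖ ≤ (M j + ε)⁻¹ * M j :=
          mul_le_mul_of_nonneg_left h2 (by positivity)
      _ = M j / (M j + ε) := by rw [inv_mul_eq_div]
      _ < 1 := (div_lt_one (hρpos j)).mpr (by linarith)
  set β : Fin n → ℝ := fun j => (1 - ‖π (c j)‖ ^ 2) / 2 with hβdef
  have hβpos : ∀ j, 0 < β j := fun j => by
    have h1 := hπcnorm j
    have h0 := norm_nonneg (π (c j))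
    rw [hβdef]; simp only; nlinarith
  have hβle : ∀ j, β j ≤ 1 := fun j => by
    have h0 := norm_nonneg (π (c j))
    rw [hβdef]; simp only; nlinarith
  set x' : Fin n → A := fun j => star (c j) * c j - algebraMap ℝ A (1 - β j) with hx'def
  have hx'sa : ∀ j, IsSelfAdjoint (x' j) :=
    fun j => (IsSelfAdjoint.star_mul_self (c j)).sub (halg_saA _)
  have hπx'le : ∀ j, π (x' j) ≤ 0 := by
    intro j
    have h1 : π (x' j) = star (π (c j)) * π (c j) - algebraMap ℝ B (1 - β j) := by
      rw [hx'def]; simp only [map_sub, map_mul, map_star, hπalg]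
    rw [h1, sub_nonpos]
    calc star (π (c j)) * π (c j) ≤ algebraMap ℝ B (‖π (c j)‖ ^ 2) :=
          CStarAlgebra.star_mul_le_algebraMap_norm_sq
      _ ≤ algebraMap ℝ B (1 - β j) := halg_monoB (by
          rw [hβdef]; simp only; nlinarith [hπcnorm j, norm_nonneg (π (c j))])
  -- the positive ideal element mm
  set mm : A := ∑ j : Fin n, (x' j)⁺ with hmmdef
  have hmm0 : 0 ≤ mm := Finset.sum_nonneg fun j _ => CFC.posPart_nonneg _
  have hmmπ : π mm = 0 := by
    rw [hmmdef, map_sum]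
    refine Finset.sum_eq_zero fun j _ => ?_
    have hb : 0 ≤ π ((x' j)⁺) := hπpos (CFC.posPart_nonneg _)
    have hc2 : 0 ≤ π ((x' j)⁻) := hπpos (CFC.negPart_nonneg _)
    have habc : π (x' j) = π ((x' j)⁺) - π ((x' j)⁻) := by
      rw [← map_sub, CFC.posPart_sub_negPart _ (hx'sa j)]
    have hbc : π ((x' j)⁺) * π ((x' j)⁻) = 0 := by
      rw [← map_mul, CFC.posPart_mul_negPart, map_zero]
    have huniq := CFC.posPart_negPart_unique habc hbc hb hc2
    have hsa' : IsSelfAdjoint (π (x' j)) := by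
      rw [habc]
      exact (IsSelfAdjoint.of_nonneg hb).sub (IsSelfAdjoint.of_nonneg hc2)
    rw [← huniq.1]
    exact (CFC.posPart_eq_zero_iff _ hsa').mpr (hπx'le j)
  have hmmge : ∀ j, x' j ≤ mm := by
    intro j
    refine le_trans (CFC.le_posPart (hx'sa j)) ?_
    exact Finset.single_le_sum (fun i _ => CFC.posPart_nonneg (x' i)) (Finset.mem_univ j)
  -- the iterated transform z
  have key : ∀ l : List (Fin n),
      0 ≤ l.foldr (fun j acc => phiSum (c j) acc) mm ∧
      π (l.foldr (fun j acc => phiSum (c j) acc) mm) = 0 ∧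
      mm ≤ l.foldr (fun j acc => phiSum (c j) acc) mm ∧
      ∀ j ∈ l, mm + star (c j) * l.foldr (fun j acc => phiSum (c j) acc) mm * c j
        ≤ l.foldr (fun j acc => phiSum (c j) acc) mm := by
    intro l
    induction l with
    | nil => exact ⟨hmm0, hmmπ, le_refl _, by simp⟩
    | cons h t ih =>
      obtain ⟨ih0, ihπ, ihm, ihb⟩ := ih
      set Zt := t.foldr (fun j acc => phiSum (c j) acc) mm with hZt
      have hfold : (h :: t).foldr (fun j acc => phiSum (c j) acc) mm = phiSum (c h) Zt := rfl
      rw [hfold]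
      refine ⟨phiSum_nonneg ih0, phiSum_pi_zero π hπcont (hsum h) ihπ,
        le_trans ihm (le_phiSum (hsum h) ih0), ?_⟩
      intro j hj
      rcases List.mem_cons.mp hj with rfl | hjt
      · have he := phiSum_eq (hsum j) Zt
        have hs2 : star (c j) * phiSum (c j) Zt * c j = phiSum (c j) Zt - Zt :=
          eq_sub_of_add_eq' he.symm
        have heq : mm + (phiSum (c j) Zt - Zt) = phiSum (c j) Zt - (Zt - mm) := by abel
        rw [hs2, heq]
        exact sub_le_self _ (sub_nonneg.mpr ihm)
      · have h1 : star (c j) * phiSum (c h) Zt * c j = phiSum (c h) (star (c j) * Zt * c j) :=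
          phiSum_conj (hsum h) (hcomm' h j) Zt
        have h2 : star (c j) * Zt * c j ≤ Zt - mm := le_sub_iff_add_le'.mpr (ihb j hjt)
        have h3 : phiSum (c h) (star (c j) * Zt * c j) ≤ phiSum (c h) Zt - phiSum (c h) mm := by
          rw [← phiSum_sub (hsum h)]
          exact phiSum_mono (hsum h) h2
        have h4 : mm ≤ phiSum (c h) mm := le_phiSum (hsum h) hmm0
        calc mm + star (c j) * phiSum (c h) Zt * c j
            ≤ mm + (phiSum (c h) Zt - phiSum (c h) mm) := by
              rw [h1]; exact add_le_add_right h3 _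
          _ ≤ phiSum (c h) mm + (phiSum (c h) Zt - phiSum (c h) mm) := add_le_add_left h4 _
          _ = phiSum (c h) Zt := by abel
  obtain ⟨hz0, hzπ, hzm, hzb⟩ := key (List.finRange n)
  set z : A := (List.finRange n).foldr (fun j acc => phiSum (c j) acc) mm with hzdef
  set g : A := 1 + z with hgdef
  have hone : (0 : A) ≤ 1 := by simpa using star_mul_self_nonneg (1 : A)
  have hg0 : 0 ≤ g := add_nonneg hone hz0
  have hπg : π g = 1 := by rw [hgdef, map_add, map_one, hzπ, add_zero]
  have hgu : IsUnit g := hunit_one_addA hz0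
  -- the key inequality: star (c j) * g * c j ≤ g
  have hkey : ∀ j, star (c j) * g * c j ≤ g := by
    intro j
    have hb := hzb j (List.mem_finRange j)
    have h2 : star (c j) * z * c j ≤ z - x' j :=
      le_trans (le_sub_iff_add_le'.mpr hb) (sub_le_sub_left (hmmge j) z)
    have h3 : star (c j) * g * c j = star (c j) * c j + star (c j) * z * c j := by
      rw [hgdef, mul_add, add_mul, mul_one]
    rw [h3]
    have h5 : algebraMap ℝ A (1 - β j) ≤ 1 := by
      calc algebraMap ℝ A (1 - β j) ≤ algebraMap ℝ A 1 := halg_monoA (by linarith [hβpos j])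
        _ = 1 := map_one _
    calc star (c j) * c j + star (c j) * z * c j
        ≤ star (c j) * c j + (z - x' j) := add_le_add_right h2 _
      _ = z + algebraMap ℝ A (1 - β j) := by rw [hx'def]; simp only; abel
      _ ≤ z + 1 := add_le_add_right h5 _
      _ = g := by rw [hgdef, add_comm]
  -- the square root and the unit
  set u' : A := CFC.sqrt g with hu'def
  have hu'0 : 0 ≤ u' := CFC.sqrt_nonneg g
  have hu'sa : IsSelfAdjoint u' := .of_nonneg hu'0
  have hu'sq : u' * u' = g := CFC.sqrt_mul_sqrt_self g hg0
  have hcommuinv : Commute u' ↑hgu.unit⁻¹ := by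
    refine Commute.units_inv_right ?_
    rw [hgu.unit_spec, ← hu'sq]
    exact (Commute.refl u').mul_right (Commute.refl u')
  obtain ⟨w, hwdef⟩ : ∃ w : A, w = u' * ↑hgu.unit⁻¹ := ⟨_, rfl⟩
  have huw : u' * w = 1 := by
    rw [hwdef, ← mul_assoc, hu'sq]
    exact hgu.mul_val_inv
  have hwu : w * u' = 1 := by
    rw [hwdef, mul_assoc, ← hcommuinv.eq, ← mul_assoc, hu'sq]
    exact hgu.mul_val_inv
  have hws : star w = w := by
    have h1 : star w * u' = 1 := by
      conv_lhs => rw [← hu'sa.star_eq]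
      rw [← star_mul, huw, star_one]
    calc star w = star w * (u' * w) := by rw [huw, mul_one]
      _ = (star w * u') * w := by rw [mul_assoc]
      _ = w := by rw [h1, one_mul]
  have hπu' : π u' = 1 := by
    have hv0 : 0 ≤ π u' := hπpos hu'0
    have hv2 : π u' * π u' = 1 := by rw [← map_mul, hu'sq, hπg]
    have hvu : IsUnit (1 + π u') := hunit_one_addB hv0
    have h0 : (π u' - 1) * (1 + π u') = 0 := by
      have he : (π u' - 1) * (1 + π u') = π u' * π u' - 1 := by noncomm_ring
      rw [he, hv2, sub_self]
    have h1 : (π u' - 1) * ((1 + π u') * ↑hvu.unit⁻¹) = 0 := by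
      rw [← mul_assoc, h0, zero_mul]
    rw [hvu.mul_val_inv, mul_one] at h1
    exact sub_eq_zero.mp h1
  have hπw : π w = 1 := by
    have h1 := congrArg π huw
    rwa [map_mul, hπu', one_mul, map_one] at h1
  refine ⟨u' - 1, by rw [map_sub, hπu', map_one, sub_self], ⟨u', w, huw, hwu⟩,
    by show u' = 1 + (u' - 1); abel, fun j => ?_⟩
  -- norm estimate
  have hcnorm : ‖u' * c j * w‖ ≤ 1 := by
    have h1 : star (u' * c j * w) = w * (star (c j) * u') := by
      rw [star_mul, star_mul, hws, hu'sa.star_eq]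
    have hsy : star (u' * c j * w) * (u' * c j * w) = w * (star (c j) * g * c j) * w := by
      rw [h1]
      calc (w * (star (c j) * u')) * (u' * c j * w)
          = w * (star (c j) * (u' * u') * c j) * w := by simp only [mul_assoc]
        _ = w * (star (c j) * g * c j) * w := by rw [hu'sq]
    have hle1 : star (u' * c j * w) * (u' * c j * w) ≤ 1 := by
      rw [hsy]
      have h2 : w * (star (c j) * g * c j) * w ≤ w * g * w := by
        have h3 := star_left_conjugate_le_conjugate (hkey j) w
        rwa [hws] at h3
      have h6 : w * g * w = 1 := by
        rw [← hu'sq]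
        calc w * (u' * u') * w = (w * u') * (u' * w) := by simp only [mul_assoc]
          _ = 1 := by rw [huw, hwu, one_mul]
      rw [h6] at h2
      exact h2
    have hy0 : 0 ≤ star (u' * c j * w) * (u' * c j * w) := star_mul_self_nonneg _
    have hnorm2 : ‖star (u' * c j * w) * (u' * c j * w)‖ ≤ 1 := by
      calc ‖star (u' * c j * w) * (u' * c j * w)‖ ≤ ‖(1 : A)‖ :=
            CStarAlgebra.norm_le_norm_of_nonneg_of_le hy0 hle1
        _ = 1 := norm_one
    rw [CStarRing.norm_star_mul_self] at hnorm2
    nlinarith [norm_nonneg (u' * c j * w)]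
  have hD : u' * a j * w = (((M j + ε) : ℝ) : ℂ) • (u' * c j * w) := by
    rw [hca j, mul_smul_comm, smul_mul_assoc]
  have hDnorm : ‖u' * a j * w‖ ≤ M j + ε := by
    rw [hD, norm_smul, Complex.norm_real, Real.norm_eq_abs, abs_of_nonneg (hρpos j).le]
    calc (M j + ε) * ‖u' * c j * w‖ ≤ (M j + ε) * 1 :=
          mul_le_mul_of_nonneg_left hcnorm (hρpos j).le
      _ = M j + ε := mul_one _
  constructor
  · refine max_le ?_ ?_
    · have hspec : spectralRadius ℂ (u' * a j * w)
          = spectralRadius ℂ (a j) := by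
        have := spectrum.units_conjugate
          (R := ℂ) (a := a j) (u := ⟨u', w, huw, hwu⟩)
        unfold spectralRadius
        rw [show ((⟨u', w, huw, hwu⟩ : Aˣ)⁻¹ : Aˣ).val = w from rfl] at this
        rw [this]
      show spectralRadius ℂ (a j) ≤ _
      rw [← hspec]
      exact spectrum.spectralRadius_le_nnnorm _
    · have hπD : π (u' * a j * w) = π (a j) := by
        rw [map_mul, map_mul, hπu', hπw, one_mul, mul_one]
      show (‖π (a j)‖₊ : ℝ≥0∞) ≤ _
      rw [← hπD]
      exact_mod_cast ENNReal.coe_le_coe.mpr (NonUnitalStarAlgHom.nnnorm_apply_le π _)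
  · have h1 : (‖u' * a j * w‖₊ : ℝ≥0∞) ≤ ENNReal.ofReal (M j + ε) := by
      rw [← enorm_eq_nnnorm, ← ofReal_norm]
      exact ENNReal.ofReal_le_ofReal hDnorm
    refine le_trans h1 ?_
    rw [ENNReal.ofReal_add (hM0 j) hε.le]
    refine add_le_add_left (le_of_eq ?_) _
    rw [hMdef]
    simp only
    rw [(Monotone.map_max (fun _ _ h => ENNReal.ofReal_le_ofReal h) :
      ENNReal.ofReal (max (spectralRadius ℂ (a j)).toReal ‖π (a j)‖)
        = max (ENNReal.ofReal (spectralRadius ℂ (a j)).toReal) (ENNReal.ofReal ‖π (a j)‖))]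
  
    rw [ENNReal.ofReal_toReal (hrfin j), ofReal_norm, enorm_eq_nnnorm]
end

section
/- Let A be a unital C*-algebra, I a closed two-sided ideal of A, and let a_1, …, a_n be pairwise commuting elements of A such that r(a_j) < ‖π(a_j)‖ for all j. Then there exists e ∈ I such that 1 + e is invertible in A and ‖(1+e) a_j (1+e)⁻¹‖ = ‖π(a_j)‖ (= max{r(a_j), ‖π(a_j)‖}) for all j = 1, …, n. -/
open scoped ENNReal



section PsiMachine

set_option linter.unusedSectionVars false

variable {A : Type*} [CStarAlgebra A] [PartialOrder A] [StarOrderedRing A]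

/-- The conjugation-series map `x ↦ ∑ₖ (bᵏ)⋆ x bᵏ`. -/
noncomputable def psiSum (b x : A) : A := ∑' k : ℕ, star (b ^ k) * x * b ^ k

/-- Conjugation by a fixed element, as an additive monoid homomorphism. -/
def conjAddHom (c : A) : A →+ A :=
  AddMonoidHom.mk' (fun y => star c * y * c) (fun x y => by simp [mul_add, add_mul])

lemma conjAddHom_apply (c y : A) : conjAddHom c y = star c * y * c := rfl

lemma conjAddHom_continuous (c : A) : Continuous (conjAddHom c) :=
  show Continuous (fun y : A => star c * y * c) from
    (continuous_const.mul continuous_id).mul continuous_const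

variable {b : A} (hb : Summable fun k : ℕ => ‖b ^ k‖ * ‖b ^ k‖)

include hb in
lemma psi_summable (x : A) : Summable fun k : ℕ => star (b ^ k) * x * b ^ k := by
  refine Summable.of_norm (Summable.of_nonneg_of_le (fun k => norm_nonneg _) (fun k => ?_)
    (hb.mul_right ‖x‖))
  calc ‖star (b ^ k) * x * b ^ k‖ ≤ ‖star (b ^ k) * x‖ * ‖b ^ k‖ := norm_mul_le _ _
    _ ≤ (‖star (b ^ k)‖ * ‖x‖) * ‖b ^ k‖ :=
        mul_le_mul_of_nonneg_right (norm_mul_le _ _) (norm_nonneg _)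
    _ = ‖b ^ k‖ * ‖b ^ k‖ * ‖x‖ := by rw [norm_star]; ring

include hb in
lemma psi_hasSum (x : A) : HasSum (fun k : ℕ => star (b ^ k) * x * b ^ k) (psiSum b x) :=
  (psi_summable hb x).hasSum

lemma psi_nonneg {x : A} (hx : 0 ≤ x) : 0 ≤ psiSum b x :=
  tsum_nonneg fun _ => star_left_conjugate_nonneg hx _

include hb in
lemma le_psi {x : A} (hx : 0 ≤ x) : x ≤ psiSum b x := by
  rw [psiSum, Summable.tsum_eq_zero_add (psi_summable hb x)]
  have h0 : star (b ^ (0 : ℕ)) * x * b ^ (0 : ℕ) = x := by simp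
  rw [h0]
  exact le_add_of_nonneg_right (tsum_nonneg fun _ => star_left_conjugate_nonneg hx _)

include hb in
lemma psi_add (x y : A) : psiSum b (x + y) = psiSum b x + psiSum b y := by
  rw [psiSum, psiSum, psiSum, ← Summable.tsum_add (psi_summable hb x) (psi_summable hb y)]
  exact tsum_congr fun k => by simp [mul_add, add_mul]

include hb in
lemma psi_sub (x y : A) : psiSum b (x - y) = psiSum b x - psiSum b y := by
  have h : psiSum b (x - y) + psiSum b y = psiSum b x := by
    rw [← psi_add hb, sub_add_cancel]
  exact eq_sub_of_add_eq h

include hb in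
lemma psi_mono {x y : A} (h : x ≤ y) : psiSum b x ≤ psiSum b y := by
  have h1 : psiSum b y - psiSum b x = psiSum b (y - x) := (psi_sub hb y x).symm
  have h2 : 0 ≤ psiSum b (y - x) := psi_nonneg (sub_nonneg.2 h)
  exact sub_nonneg.1 (h1 ▸ h2)

include hb in
lemma psi_conj (x : A) : star b * psiSum b x * b = psiSum b x - x := by
  have h2 := (psi_hasSum hb x).map (conjAddHom b) (conjAddHom_continuous b)
  have heq : (⇑(conjAddHom b) ∘ fun k : ℕ => star (b ^ k) * x * b ^ k) =
      fun k : ℕ => star (b ^ (k + 1)) * x * b ^ (k + 1) := by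
    funext k
    simp only [Function.comp_apply, conjAddHom_apply, pow_succ, star_mul, mul_assoc]
  rw [heq, conjAddHom_apply] at h2
  have h4 := Summable.tsum_eq_zero_add (psi_summable hb x)
  rw [h2.tsum_eq] at h4
  have h0 : star (b ^ (0 : ℕ)) * x * b ^ (0 : ℕ) = x := by simp
  rw [h0] at h4
  exact eq_sub_of_add_eq (by rw [add_comm]; exact h4.symm)

include hb in
lemma psi_commute {c : A} (hbc : Commute b c) (x : A) :
    star c * psiSum b x * c = psiSum b (star c * x * c) := by
  have h := (psi_hasSum hb x).map (conjAddHom c) (conjAddHom_continuous c)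
  have heq : (⇑(conjAddHom c) ∘ fun k : ℕ => star (b ^ k) * x * b ^ k) =
      fun k : ℕ => star (b ^ k) * (star c * x * c) * b ^ k := by
    funext k
    have h1 : Commute (star (b ^ k)) (star c) := (hbc.pow_left k).star_star
    have h2 : b ^ k * c = c * b ^ k := (hbc.pow_left k).eq
    simp only [Function.comp_apply, conjAddHom_apply]
    calc star c * (star (b ^ k) * x * b ^ k) * c
        = (star c * star (b ^ k)) * x * (b ^ k * c) := by noncomm_ring
      _ = (star (b ^ k) * star c) * x * (c * b ^ k) := by rw [← h1.eq, h2]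
      _ = star (b ^ k) * (star c * x * c) * b ^ k := by noncomm_ring
  rw [heq, conjAddHom_apply] at h
  exact h.tsum_eq.symm

include hb in
lemma psi_pi {B : Type*} [CStarAlgebra B] (π : A →⋆ₐ[ℂ] B) {x : A} (hx : π x = 0) :
    π (psiSum b x) = 0 := by
  have hcont : Continuous π := AddMonoidHomClass.continuous_of_bound π 1 fun y => by
    simpa [one_mul] using NonUnitalStarAlgHom.norm_apply_le π y
  have h := (psi_hasSum hb x).map π hcont
  have heq : (⇑π ∘ fun k : ℕ => star (b ^ k) * x * b ^ k) = fun _ : ℕ => (0 : B) := by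
    funext k; simp [Function.comp_apply, map_mul, hx]
  rw [heq] at h
  simpa using h.unique hasSum_zero

end PsiMachine

section SeqMachine

set_option linter.unusedSectionVars false

variable {A : Type*} [CStarAlgebra A] [PartialOrder A] [StarOrderedRing A]

/-- Iterated application of the conjugation-series maps. -/
noncomputable def seqF {n : ℕ} (b : Fin n → A) (m : A) : ℕ → A
  | 0 => m
  | k + 1 => if h : k < n then psiSum (b ⟨k, h⟩) (seqF b m k) else seqF b m k

lemma seqF_succ {n : ℕ} (b : Fin n → A) (m : A) (k : ℕ) :
    seqF b m (k + 1) = if h : k < n then psiSum (b ⟨k, h⟩) (seqF b m k) else seqF b m k := rfl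

variable {n : ℕ} {b : Fin n → A} {m : A}
  (hb : ∀ j, Summable fun k : ℕ => ‖b j ^ k‖ * ‖b j ^ k‖) (hm : 0 ≤ m)

include hb hm in
lemma le_seqF : ∀ k, m ≤ seqF b m k := by
  intro k
  induction k with
  | zero => exact le_rfl
  | succ k ih =>
    rw [seqF_succ]
    split_ifs with h
    · exact ih.trans (le_psi (hb ⟨k, h⟩) (hm.trans ih))
    · exact ih

include hb in
lemma seqF_pi {B : Type*} [CStarAlgebra B] (π : A →⋆ₐ[ℂ] B) (hπm : π m = 0) :
    ∀ k, π (seqF b m k) = 0 := by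
  intro k
  induction k with
  | zero => exact hπm
  | succ k ih =>
    rw [seqF_succ]
    split_ifs with h
    · exact psi_pi (hb ⟨k, h⟩) π ih
    · exact ih

include hb hm in
lemma seqF_key (hcomm : ∀ i j, Commute (b i) (b j)) :
    ∀ (k : ℕ) (j : Fin n), (j : ℕ) < k →
      star (b j) * seqF b m k * b j ≤ seqF b m k - m := by
  intro k
  induction k with
  | zero => exact fun j hj => absurd hj (by omega)
  | succ k ih =>
    intro j hj
    rw [seqF_succ]
    split_ifs with h
    · set i : Fin n := ⟨k, h⟩ with hi
      by_cases hjk : (j : ℕ) = k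
      · have hji : j = i := Fin.ext hjk
        rw [hji, psi_conj (hb i)]
        exact sub_le_sub_left (le_seqF hb hm k) _
      · have hjk' : (j : ℕ) < k := by omega
        have hc : Commute (b i) (b j) := hcomm i j
        rw [psi_commute (hb i) hc]
        calc psiSum (b i) (star (b j) * seqF b m k * b j)
            ≤ psiSum (b i) (seqF b m k - m) := psi_mono (hb i) (ih j hjk')
          _ = psiSum (b i) (seqF b m k) - psiSum (b i) m := psi_sub (hb i) _ _
          _ ≤ psiSum (b i) (seqF b m k) - m := sub_le_sub_left (le_psi (hb i) hm) _
    · have hjn : (j : ℕ) < k := by have := j.isLt; omega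
      exact ih j hjn

end SeqMachine

section MainAux

theorem mainAux {A B : Type*} [CStarAlgebra A] [PartialOrder A] [StarOrderedRing A]
    [CStarAlgebra B] (π : A →⋆ₐ[ℂ] B) {n : ℕ} (b : Fin n → A)
    (hcomm : ∀ i j, Commute (b i) (b j))
    (hb : ∀ j, Summable fun k : ℕ => ‖b j ^ k‖ * ‖b j ^ k‖)
    (hnorm : ∀ j, ‖π (b j)‖ = 1) :
    ∃ e : A, π e = 0 ∧ ∃ u : Aˣ, (u : A) = 1 + e ∧
      ∀ j, ‖(u : A) * b j * ((u⁻¹ : Aˣ) : A)‖ = 1 := by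
  have hcontπ : Continuous π := AddMonoidHomClass.continuous_of_bound π 1 fun y => by
    simpa [one_mul] using NonUnitalStarAlgHom.norm_apply_le π y
  set f : ℝ → ℝ := fun x => max (x - 1) 0 with hf
  have hfc : Continuous f := by fun_prop
  set mj : Fin n → A := fun j => cfc f (star (b j) * b j) with hmj
  have hmj0 : ∀ j, 0 ≤ mj j := fun j => cfc_nonneg (fun x _ => le_max_right _ _)
  set m : A := ∑ j, mj j with hmdef
  have hm0 : 0 ≤ m := Finset.sum_nonneg fun j _ => hmj0 j
  have hmle : ∀ j, mj j ≤ m := fun j =>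
    Finset.single_le_sum (fun i _ => hmj0 i) (Finset.mem_univ j)
  have hmπ : π m = 0 := by
    rw [hmdef, map_sum]
    refine Finset.sum_eq_zero fun j _ => ?_
    have hsa : IsSelfAdjoint (star (b j) * b j) := IsSelfAdjoint.star_mul_self _
    rw [hmj]
    have hBnt : Nontrivial B := by
      refine nontrivial_of_ne (π (b j)) 0 fun h0 => ?_
      have h1 := hnorm j
      rw [h0, norm_zero] at h1
      exact one_ne_zero h1.symm
    have hsaB : IsSelfAdjoint (π (star (b j) * b j)) := by
      rw [map_mul, map_star]; exact IsSelfAdjoint.star_mul_self _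
    rw [StarAlgHom.map_cfc π f (star (b j) * b j) (hfc.continuousOn) hcontπ hsa hsaB]
    have hsp : (spectrum ℝ (π (star (b j) * b j))).EqOn f (fun _ => (0 : ℝ)) := by
      intro x hx
      have h1 : ‖π (star (b j) * b j)‖ = 1 := by
        rw [map_mul, map_star, CStarRing.norm_star_mul_self, hnorm j, one_mul]
      have h2 : x ≤ 1 := by
        have h3 := spectrum.norm_le_norm_of_mem hx
        rw [h1] at h3
        calc x ≤ |x| := le_abs_self x
          _ ≤ 1 := by rwa [← Real.norm_eq_abs]
      simp [hf, max_eq_right, sub_nonpos.mpr h2]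
    rw [cfc_congr hsp, cfc_const 0 _, map_zero]
  have hkey1 : ∀ j, star (b j) * b j ≤ 1 + m := by
    intro j
    have hsa : IsSelfAdjoint (star (b j) * b j) := IsSelfAdjoint.star_mul_self _
    have h1 : star (b j) * b j ≤ 1 + mj j := by
      calc star (b j) * b j = cfc (id : ℝ → ℝ) (star (b j) * b j) := (cfc_id ℝ _).symm
        _ ≤ cfc (fun x : ℝ => 1 + f x) (star (b j) * b j) := by
            refine cfc_mono (fun x _ => ?_)
            rcases le_total x 1 with hx | hx
            · have := le_max_right (x - 1) 0; simp only [hf, id]; linarith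
            · have := le_max_left (x - 1) 0; simp only [hf, id]; linarith
        _ = cfc (fun _ : ℝ => (1 : ℝ)) (star (b j) * b j) + cfc f (star (b j) * b j) :=
            cfc_add _ _ _
        _ = 1 + mj j := by rw [cfc_const 1 _, map_one, hmj]
    exact h1.trans (add_le_add_right (hmle j) 1)
  set T : A := seqF b m n with hTdef
  have hT0 : 0 ≤ T := hm0.trans (le_seqF hb hm0 n)
  have hTkey : ∀ j, star (b j) * T * b j ≤ T - m := fun j =>
    seqF_key hb hm0 hcomm n j j.isLt
  have hTπ : π T = 0 := seqF_pi hb π hmπ n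
  set t : A := 1 + T with htdef
  have ht1 : (1 : A) ≤ t := le_add_of_nonneg_right hT0
  have ht0 : (0 : A) ≤ t := zero_le_one.trans ht1
  have htπ : π t = 1 := by rw [htdef, map_add, map_one, hTπ, add_zero]
  have htu : IsUnit t := CStarAlgebra.isUnit_of_le 1 ht1 isStrictlyPositive_one
  have htkey : ∀ j, star (b j) * t * b j ≤ t := by
    intro j
    calc star (b j) * t * b j = star (b j) * b j + star (b j) * T * b j := by
          rw [htdef]; noncomm_ring
      _ ≤ (1 + m) + (T - m) := add_le_add (hkey1 j) (hTkey j)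
      _ = t := by rw [htdef]; abel
  set s : A := CFC.sqrt t with hsdef
  have hs0 : 0 ≤ s := CFC.sqrt_nonneg t
  have hss : s * s = t := CFC.sqrt_mul_sqrt_self t ht0
  have hsa : IsSelfAdjoint s := IsSelfAdjoint.of_nonneg hs0
  have hst : Commute s t := by rw [← hss]; exact (Commute.refl s).mul_right (Commute.refl s)
  obtain ⟨t', ht'⟩ := htu
  have hsu : IsUnit s := by
    have hc : Commute s ((t'⁻¹ : Aˣ) : A) := by
      refine Commute.units_inv_right ?_
      rw [ht']; exact hst
    refine isUnit_iff_exists.mpr ⟨(t'⁻¹ : Aˣ) * s, ?_, ?_⟩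
    · calc s * ((t'⁻¹ : Aˣ) * s) = ((s : A) * (t'⁻¹ : Aˣ)) * s := by rw [mul_assoc]
        _ = ((t'⁻¹ : Aˣ) * s) * s := by rw [hc.eq]
        _ = (t'⁻¹ : Aˣ) * t := by rw [mul_assoc, hss]
        _ = (t'⁻¹ : Aˣ) * t' := by rw [ht']
        _ = 1 := t'.inv_mul
    · calc ((t'⁻¹ : Aˣ) * s) * s = (t'⁻¹ : Aˣ) * t := by rw [mul_assoc, hss]
        _ = (t'⁻¹ : Aˣ) * t' := by rw [ht']
        _ = 1 := t'.inv_mul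
  set u : Aˣ := hsu.unit with hudef
  have hu : (u : A) = s := hsu.unit_spec
  have h1s : IsUnit (1 + s) :=
    CStarAlgebra.isUnit_of_le 1 (le_add_of_nonneg_right hs0) isStrictlyPositive_one
  obtain ⟨v, hv⟩ := h1s
  have hsT : (s - 1) * (1 + s) = T := by
    have h5 : (s - 1) * (1 + s) = s * s - 1 := by noncomm_ring
    rw [h5, hss, htdef, add_sub_cancel_left]
  have hπe : π (s - 1) = 0 := by
    have h2 : s - 1 = T * ((v⁻¹ : Aˣ) : A) := by
      calc s - 1 = (s - 1) * ((v : A) * (v⁻¹ : Aˣ)) := by rw [v.mul_inv, mul_one]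
        _ = ((s - 1) * (v : A)) * (v⁻¹ : Aˣ) := by rw [mul_assoc]
        _ = T * ((v⁻¹ : Aˣ) : A) := by rw [hv, hsT]
    rw [h2, map_mul, hTπ, zero_mul]
  have hπu : π (u : A) = 1 := by
    rw [hu, show s = 1 + (s - 1) by abel, map_add, map_one, hπe, add_zero]
  have hπuinv : π ((u⁻¹ : Aˣ) : A) = 1 := by
    have h3 : π (u : A) * π ((u⁻¹ : Aˣ) : A) = 1 := by
      rw [← map_mul, u.mul_inv, map_one]
    rwa [hπu, one_mul] at h3
  refine ⟨s - 1, hπe, u, by rw [hu]; abel, ?_⟩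
  intro j
  have hbj : b j ≠ 0 := by
    intro h0
    have h1 := hnorm j
    rw [h0, map_zero, norm_zero] at h1
    exact one_ne_zero h1.symm
  have : Nontrivial A := nontrivial_of_ne (b j) 0 hbj
  set x : A := (u : A) * b j * ((u⁻¹ : Aˣ) : A) with hxdef
  have hops : star ((u⁻¹ : Aˣ) : A) = ((u⁻¹ : Aˣ) : A) := by
    have h4 : star ((u⁻¹ : Aˣ) : A) * s = 1 := by
      have h5 : star ((u⁻¹ : Aˣ) : A) * s = star (s * ((u⁻¹ : Aˣ) : A)) := by
        rw [star_mul, hsa.star_eq]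
      rw [h5, ← hu, u.mul_inv, star_one]
    calc star ((u⁻¹ : Aˣ) : A)
        = star ((u⁻¹ : Aˣ) : A) * ((u : A) * ((u⁻¹ : Aˣ) : A)) := by
          rw [u.mul_inv, mul_one]
      _ = (star ((u⁻¹ : Aˣ) : A) * s) * ((u⁻¹ : Aˣ) : A) := by rw [hu, mul_assoc]
      _ = ((u⁻¹ : Aˣ) : A) := by rw [h4, one_mul]
  have hxx : star x * x ≤ 1 := by
    have e1 : star x * x = ((u⁻¹ : Aˣ) : A) * (star (b j) * t * b j) * ((u⁻¹ : Aˣ) : A) := by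
      rw [hxdef, hu]
      rw [star_mul, star_mul, hops, hsa.star_eq, ← hss]
      noncomm_ring
    have e2 := star_left_conjugate_le_conjugate (htkey j) ((u⁻¹ : Aˣ) : A)
    rw [hops] at e2
    have e3 : ((u⁻¹ : Aˣ) : A) * t * ((u⁻¹ : Aˣ) : A) = 1 := by
      rw [← hss, ← hu]
      calc (u⁻¹ : Aˣ) * ((u : A) * (u : A)) * ((u⁻¹ : Aˣ) : A)
          = (((u⁻¹ : Aˣ) : A) * (u : A)) * ((u : A) * ((u⁻¹ : Aˣ) : A)) := by noncomm_ring
        _ = 1 := by rw [u.inv_mul, u.mul_inv, one_mul]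
    rw [e1]
    calc ((u⁻¹ : Aˣ) : A) * (star (b j) * t * b j) * ((u⁻¹ : Aˣ) : A)
        ≤ ((u⁻¹ : Aˣ) : A) * t * ((u⁻¹ : Aˣ) : A) := e2
      _ = 1 := e3
  have hx1 : ‖x‖ ≤ 1 := by
    have h5 : ‖star x * x‖ ≤ 1 := by
      rw [CStarAlgebra.norm_le_one_iff_of_nonneg (star x * x) (star_mul_self_nonneg x)]
      exact hxx
    have h6 : ‖x‖ * ‖x‖ ≤ 1 := by rw [← CStarRing.norm_star_mul_self]; exact h5
    nlinarith [norm_nonneg x]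
  have hx2 : (1 : ℝ) ≤ ‖x‖ := by
    have h7 : π x = π (b j) := by
      rw [hxdef, map_mul, map_mul, hπu, hπuinv, one_mul, mul_one]
    calc (1 : ℝ) = ‖π (b j)‖ := (hnorm j).symm
      _ = ‖π x‖ := by rw [h7]
      _ ≤ ‖x‖ := NonUnitalStarAlgHom.norm_apply_le π x
  exact le_antisymm hx1 hx2

end MainAux

open scoped NNReal

section Glue

open Filter in
lemma summable_sq_norm_of_spectralRadius_lt {A : Type*} [NormedRing A] [NormedAlgebra ℂ A]
    [CompleteSpace A] (a : A) {C : ℝ≥0} (hC : 0 < C)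
    (h : spectralRadius ℂ a < (C : ℝ≥0∞)) :
    Summable fun k : ℕ => ‖(((C : ℝ))⁻¹ • a) ^ k‖ * ‖(((C : ℝ))⁻¹ • a) ^ k‖ := by
  obtain ⟨ρ, hρ1, hρ2⟩ := exists_between h
  have hρtop : ρ ≠ ⊤ := (hρ2.trans ENNReal.coe_lt_top).ne
  set r : ℝ≥0 := ρ.toNNReal with hrdef
  have hρeq : (r : ℝ≥0∞) = ρ := ENNReal.coe_toNNReal hρtop
  have hrC : r < C := by rw [← ENNReal.coe_lt_coe, hρeq]; exact hρ2
  have hgel := spectrum.pow_nnnorm_pow_one_div_tendsto_nhds_spectralRadius a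
  have hev : ∀ᶠ k : ℕ in atTop, (‖a ^ k‖₊ : ℝ≥0∞) ^ (1 / (k : ℝ)) < ρ :=
    hgel.eventually_lt_const hρ1
  obtain ⟨N, hN⟩ := eventually_atTop.mp (hev.and (eventually_ge_atTop 1))
  have hbound : ∀ k, N ≤ k → ‖a ^ k‖ ≤ (r : ℝ) ^ k := by
    intro k hk
    obtain ⟨h1, h2⟩ := hN k hk
    have hk0 : (k : ℝ) ≠ 0 := Nat.cast_ne_zero.mpr (by omega)
    have h3 : ((‖a ^ k‖₊ : ℝ≥0∞) ^ (1 / (k : ℝ))) ^ (k : ℝ) ≤ ρ ^ (k : ℝ) :=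
      ENNReal.rpow_le_rpow h1.le (by positivity)
    rw [← ENNReal.rpow_mul, one_div, inv_mul_cancel₀ hk0, ENNReal.rpow_one] at h3
    rw [← hρeq, ← ENNReal.coe_rpow_of_nonneg _ (by positivity), ENNReal.coe_le_coe] at h3
    rw [NNReal.rpow_natCast] at h3
    calc ‖a ^ k‖ = ((‖a ^ k‖₊ : ℝ)) := rfl
      _ ≤ ((r ^ k : ℝ≥0) : ℝ) := by exact_mod_cast h3
      _ = (r : ℝ) ^ k := by push_cast; ring
  set q : ℝ := (r : ℝ) / (C : ℝ) with hq
  have hCpos : (0 : ℝ) < (C : ℝ) := hC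
  have hq0 : 0 ≤ q := by positivity
  have hq1 : q < 1 := by
    rw [hq, div_lt_one hCpos]
    exact_mod_cast hrC
  have hnormb : ∀ k, N ≤ k → ‖(((C : ℝ))⁻¹ • a) ^ k‖ ≤ q ^ k := by
    intro k hk
    rw [smul_pow, norm_smul, norm_pow, Real.norm_eq_abs, abs_inv, abs_of_pos hCpos, inv_pow]
    calc ((C : ℝ) ^ k)⁻¹ * ‖a ^ k‖ ≤ ((C : ℝ) ^ k)⁻¹ * (r : ℝ) ^ k := by
          have := hbound k hk
          gcongr
      _ = q ^ k := by rw [hq, div_pow]; field_simp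
  rw [← summable_nat_add_iff N]
  have hgeom : Summable fun k : ℕ => (q * q) ^ N * (q * q) ^ k :=
    (summable_geometric_of_lt_one (by positivity) (by nlinarith)).mul_left _
  refine Summable.of_nonneg_of_le (fun k => by positivity) (fun k => ?_)
    (hgeom.congr fun k => by rw [← pow_add, add_comm N k])
  have h5 := hnormb (k + N) (by omega)
  calc ‖(((C : ℝ))⁻¹ • a) ^ (k + N)‖ * ‖(((C : ℝ))⁻¹ • a) ^ (k + N)‖
      ≤ q ^ (k + N) * q ^ (k + N) := mul_le_mul h5 h5 (norm_nonneg _) (by positivity)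
    _ = (q * q) ^ (k + N) := by rw [mul_pow]

end Glue

/- STATEMENT 2: Let `A` be a unital C*-algebra, `I` a closed two-sided ideal of `A`, and
`a_1, …, a_n` pairwise commuting elements of `A` with `r(a_j) < ‖π(a_j)‖` for all `j`.
Then there exists `e ∈ I` such that `1 + e` is invertible in `A` and
`‖(1+e) a_j (1+e)⁻¹‖ = ‖π(a_j)‖` for all `j`.

The quotient C*-algebra `A/I` together with the canonical surjection `π : A → A/I` is
formalized as a surjective star algebra homomorphism `π : A →⋆ₐ[ℂ] B` onto a C*-algebra
`B`; the ideal `I` is then the kernel of `π`, so `e ∈ I` is expressed as `π e = 0`. -/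
theorem stmt_2
    {A : Type*} [NormedRing A] [StarRing A] [CStarRing A] [CompleteSpace A]
    [NormedAlgebra ℂ A] [StarModule ℂ A]
    {B : Type*} [NormedRing B] [StarRing B] [CStarRing B] [CompleteSpace B]
    [NormedAlgebra ℂ B] [StarModule ℂ B]
    (π : A →⋆ₐ[ℂ] B) (hπ : Function.Surjective π)
    (n : ℕ) (a : Fin n → A)
    (hcomm : ∀ i j, Commute (a i) (a j))
    (hr : ∀ j, spectralRadius ℂ (a j) < (‖π (a j)‖₊ : ℝ≥0∞)) :
    ∃ e : A, π e = 0 ∧ ∃ u : Aˣ, (u : A) = 1 + e ∧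
      ∀ j, ‖(u : A) * a j * ((u⁻¹ : Aˣ) : A)‖ = ‖π (a j)‖ := by
  letI : CStarAlgebra A := {}
  letI : CStarAlgebra B := {}
  letI : PartialOrder A := CStarAlgebra.spectralOrder A
  letI : StarOrderedRing A := CStarAlgebra.spectralOrderedRing A
  set C : Fin n → ℝ≥0 := fun j => ‖π (a j)‖₊ with hC
  have hCpos : ∀ j, 0 < C j := by
    intro j
    rw [pos_iff_ne_zero]
    intro h0
    have h1 := hr j
    rw [show (C j : ℝ≥0∞) = 0 by exact_mod_cast h0] at h1
    exact (not_lt_of_ge zero_le) h1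
  have hCr : ∀ j, ((C j : ℝ)) = ‖π (a j)‖ := fun j => rfl
  set b : Fin n → A := fun j => ((C j : ℝ))⁻¹ • a j with hb
  have hcommb : ∀ i j, Commute (b i) (b j) := fun i j =>
    ((hcomm i j).smul_left _).smul_right _
  have hsumb : ∀ j, Summable fun k : ℕ => ‖b j ^ k‖ * ‖b j ^ k‖ := fun j =>
    summable_sq_norm_of_spectralRadius_lt (a j) (hCpos j) (hr j)
  have hCne : ∀ j, ((C j : ℝ)) ≠ 0 := fun j => by
    have := hCpos j
    positivity
  have hnormb : ∀ j, ‖π (b j)‖ = 1 := by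
    intro j
    have hmap : π (b j) = ((C j : ℝ))⁻¹ • π (a j) := by
      rw [hb]
      simp only
      rw [← Complex.coe_smul, map_smul, Complex.coe_smul]
    rw [hmap, norm_smul, Real.norm_eq_abs, abs_inv,
      abs_of_pos (show (0:ℝ) < (C j : ℝ) from hCpos j), ← hCr j]
    exact inv_mul_cancel₀ (hCne j)
  obtain ⟨e, he, u, hu, hnorms⟩ := mainAux π b hcommb hsumb hnormb
  refine ⟨e, he, u, hu, fun j => ?_⟩
  have hba : a j = (C j : ℝ) • b j := by
    rw [hb]
    simp only
    rw [smul_smul, mul_inv_cancel₀ (hCne j), one_smul]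
  calc ‖(u : A) * a j * ((u⁻¹ : Aˣ) : A)‖
      = ‖(C j : ℝ) • ((u : A) * b j * ((u⁻¹ : Aˣ) : A))‖ := by
        rw [hba, mul_smul_comm, smul_mul_assoc]
    _ = (C j : ℝ) * 1 := by
        rw [norm_smul, hnorms j, Real.norm_eq_abs,
          abs_of_pos (show (0:ℝ) < (C j : ℝ) from hCpos j)]
    _ = ‖π (a j)‖ := by rw [mul_one, hCr j]
end

section
/- Let A be a unital C*-algebra, I a closed two-sided ideal of A, and a ∈ A. Then max{r(a), ‖π(a)‖} = inf{‖(1+e) a (1+e)⁻¹‖ : e ∈ I and 1 + e is invertible in A}. -/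
open scoped ENNReal NNReal CStarAlgebra

set_option maxHeartbeats 1000000

lemma aux_pow_le {A : Type*} [NormedRing A] [NormedAlgebra ℂ A] [CompleteSpace A] [NormOneClass A]
    (a : A) {r : ℝ≥0} (hr : spectralRadius ℂ a < r) :
    ∀ᶠ n in Filter.atTop, ‖a ^ n‖₊ ≤ r ^ n := by
  have h := spectrum.pow_nnnorm_pow_one_div_tendsto_nhds_spectralRadius a
  have h2 : ∀ᶠ n : ℕ in Filter.atTop, (‖a ^ n‖₊ : ℝ≥0∞) ^ (1 / (n : ℝ)) < r :=
    h.eventually_lt_const hr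
  filter_upwards [h2, Filter.eventually_gt_atTop 0] with n hn hn0
  have hx : (‖a ^ n‖₊ : ℝ≥0∞) = ((‖a ^ n‖₊ : ℝ≥0∞) ^ (1 / (n : ℝ))) ^ (n : ℝ) := by
    rw [← ENNReal.rpow_mul, one_div, inv_mul_cancel₀ (by exact_mod_cast hn0.ne'),
      ENNReal.rpow_one]
  have h3 := ENNReal.rpow_le_rpow hn.le (Nat.cast_nonneg n)
  rw [← hx, ENNReal.rpow_natCast, ← ENNReal.coe_pow, ENNReal.coe_le_coe] at h3
  exact h3

section
variable {A : Type*} [CStarAlgebra A] [PartialOrder A] [StarOrderedRing A]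

lemma alg_nonneg {t : ℝ} (ht : 0 ≤ t) : 0 ≤ algebraMap ℝ A t := by
  have h : algebraMap ℝ A t
      = star (algebraMap ℝ A (Real.sqrt t)) * algebraMap ℝ A (Real.sqrt t) := by
    rw [Algebra.algebraMap_eq_smul_one (A := A) (Real.sqrt t), star_smul, star_trivial, star_one,
      smul_mul_assoc, mul_smul_comm, smul_smul, one_mul, Real.mul_self_sqrt ht,
      Algebra.algebraMap_eq_smul_one]
  rw [h]
  exact star_mul_self_nonneg _

lemma key {B : Type*} [CStarAlgebra B] [PartialOrder B] [StarOrderedRing B]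
    (π : A →⋆ₐ[ℂ] B) (a : A) (ρ : ℝ≥0) (hρ : 0 < ρ)
    (h1 : spectralRadius ℂ a < ρ) (h2 : ‖π a‖₊ < ρ) :
    ∃ u : Aˣ, π ((u : A) - 1) = 0 ∧ ‖(u : A) * a * ((u⁻¹ : Aˣ) : A)‖₊ ≤ ρ := by
  classical
  obtain hA | hA := subsingleton_or_nontrivial A
  · refine ⟨1, ?_, ?_⟩
    · rw [Units.val_one, sub_self, map_zero]
    · have h0 : ((1:Aˣ):A) * a * ((1⁻¹:Aˣ):A) = 0 := Subsingleton.elim _ _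
      rw [h0, nnnorm_zero]
      exact zero_le
  set ρr : ℝ := (ρ : ℝ) with hρr_def
  have hρr : 0 < ρr := hρ
  -- choose r' strictly between the spectral radius and ρ
  obtain ⟨r', hr'1, hr'2⟩ := ENNReal.lt_iff_exists_nnreal_btwn.mp h1
  have hr'ρ : (r' : ℝ) < ρr := by exact_mod_cast ENNReal.coe_lt_coe.mp hr'2
  set rr : ℝ := (r' : ℝ) with hrr_def
  have hrr0 : 0 ≤ rr := r'.2
  -- choose s strictly between ‖π a‖² and ρ²
  obtain ⟨s, hs1, hs2⟩ := exists_between (pow_lt_pow_left₀ h2 zero_le two_ne_zero)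
  set sr : ℝ := (s : ℝ) with hsr_def
  have hs0' : 0 < sr := by
    have : (0:ℝ≥0) ≤ ‖π a‖₊ ^ 2 := zero_le
    exact_mod_cast lt_of_le_of_lt this hs1
  have hsρ : sr < ρr ^ 2 := by exact_mod_cast hs2
  -- the element c = a * star a and the cutoff functions
  set c : A := a * star a with hc_def
  have hc : 0 ≤ c := mul_star_self_nonneg a
  set g : ℝ → ℝ := fun t => sr / max t sr with hg_def
  have hgc : Continuous g :=
    continuous_const.div (continuous_id.max continuous_const)
      fun t => (lt_of_lt_of_le hs0' (le_max_right t sr)).ne'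
  have hg0 : ∀ t, 0 ≤ g t := fun t =>
    div_nonneg hs0'.le (le_trans hs0'.le (le_max_right t sr))
  have hg1 : ∀ t, g t ≤ 1 := fun t =>
    div_le_one_of_le₀ (le_max_right t sr) (le_trans hs0'.le (le_max_right t sr))
  set f : ℝ → ℝ := fun t => 1 - g t with hf_def
  have hfc : Continuous f := continuous_const.sub hgc
  set m : A := cfc f c with hm_def
  have hm0 : 0 ≤ m := cfc_nonneg fun t _ => by simpa [hf_def] using hg1 t
  have hmsa : IsSelfAdjoint m := .of_nonneg hm0
  -- π kills m
  have hπcont : Continuous π := map_continuous π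
  have hπm : π m = 0 := by
    obtain hB | hB := subsingleton_or_nontrivial B
    · exact Subsingleton.elim _ _
    · have hmap : π m = cfc f (π c) :=
        StarAlgHom.map_cfc π f c hfc.continuousOn hπcont (.of_nonneg hc)
          ((IsSelfAdjoint.of_nonneg hc).map π)
      have hnc : ‖π c‖ < sr := by
        have hpc : π c = π a * star (π a) := by simp [hc_def, map_mul, map_star]
        rw [hpc, CStarRing.norm_self_mul_star]
        have := NNReal.coe_lt_coe.mpr hs1
        rw [NNReal.coe_pow] at this
        calc ‖π a‖ * ‖π a‖ = (‖π a‖₊ : ℝ) ^ 2 := by rw [coe_nnnorm]; ring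
          _ < sr := this
      have hz : ∀ t ∈ spectrum ℝ (π c), f t = (fun _ : ℝ => (0:ℝ)) t := by
        intro t ht
        have ht' : t ≤ ‖π c‖ := le_trans (le_abs_self t) (spectrum.norm_le_norm_of_mem ht)
        have hmax : max t sr = sr := max_eq_right (by linarith)
        simp [hf_def, hg_def, hmax, div_self hs0'.ne']
      rw [hmap, cfc_congr hz, cfc_const_zero]
  -- the square root of 1 - m
  set q : A := cfc (fun t => Real.sqrt (g t)) c with hq_def
  have hsqc : Continuous fun t => Real.sqrt (g t) := Real.continuous_sqrt.comp hgc
  have hq_sa : IsSelfAdjoint q := cfc_predicate _ c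
  have hqq : q * q = 1 - m := by
    rw [hq_def, ← cfc_mul _ _ c hsqc.continuousOn hsqc.continuousOn]
    have e1 : cfc (fun t => Real.sqrt (g t) * Real.sqrt (g t)) c = cfc g c :=
      cfc_congr fun t _ => Real.mul_self_sqrt (hg0 t)
    have e2 : cfc g c = cfc (fun t => 1 - f t) c :=
      cfc_congr fun t _ => by simp [hf_def]
    rw [e1, e2, cfc_sub _ _ c continuousOn_const hfc.continuousOn, cfc_const_one ℝ c]
  -- the norm bound ‖q * (c * q)‖ ≤ sr
  have hA1 : cfc (fun t : ℝ => t * Real.sqrt (g t)) c = c * q := by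
    rw [cfc_mul _ _ c continuous_id'.continuousOn hsqc.continuousOn, cfc_id' ℝ c, hq_def]
  have hA2 : cfc (fun t : ℝ => Real.sqrt (g t) * (t * Real.sqrt (g t))) c = q * (c * q) := by
    rw [cfc_mul (fun t => Real.sqrt (g t)) (fun t : ℝ => t * Real.sqrt (g t)) c hsqc.continuousOn (continuous_id'.mul hsqc).continuousOn, hA1, hq_def]
  have hnormqcq : ‖q * (c * q)‖ ≤ sr := by
    rw [← hA2]
    apply norm_cfc_le hs0'.le
    intro t ht
    have ht0 : 0 ≤ t := spectrum_nonneg_of_nonneg hc ht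
    have hkey : Real.sqrt (g t) * (t * Real.sqrt (g t)) = g t * t := by
      calc Real.sqrt (g t) * (t * Real.sqrt (g t))
          = (Real.sqrt (g t) * Real.sqrt (g t)) * t := by ring
        _ = g t * t := by rw [Real.mul_self_sqrt (hg0 t)]
    rw [hkey, Real.norm_eq_abs, abs_of_nonneg (mul_nonneg (hg0 t) ht0)]
    rw [hg_def]
    rw [div_mul_eq_mul_div, div_le_iff₀ (lt_of_lt_of_le hs0' (le_max_right t sr))]
    exact mul_le_mul_of_nonneg_left (le_max_left t sr) hs0'.le
  -- E1 : star a * a - star a * m * a ≤ sr • 1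
  have hv_eq : star (q * a) * (q * a) = star a * a - star a * m * a := by
    rw [star_mul, hq_sa.star_eq]
    calc star a * q * (q * a) = star a * (q * q) * a := by noncomm_ring
      _ = star a * a - star a * m * a := by rw [hqq]; noncomm_ring
  have hvn : ‖star (q * a) * (q * a)‖ ≤ sr := by
    rw [CStarRing.norm_star_mul_self]
    have hws : (q * a) * star (q * a) = q * (c * q) := by
      rw [star_mul, hq_sa.star_eq, hc_def]; noncomm_ring
    have := hnormqcq
    rw [← hws, CStarRing.norm_self_mul_star] at this
    exact this
  have E1 : star a * a - star a * m * a ≤ algebraMap ℝ A sr := by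
    rw [← hv_eq]
    exact (CStarAlgebra.norm_le_iff_le_algebraMap _ hs0'.le (star_mul_self_nonneg _)).mp hvn
  -- the series
  set w : ℕ → A := fun k => (ρr⁻¹ ^ k) • a ^ k with hw_def
  set F : ℕ → A := fun k => star (w k) * m * w k with hF_def
  set G : ℕ → A := fun k => F (k + 1) with hG_def
  have hF0 : ∀ k, 0 ≤ F k := fun k => star_left_conjugate_nonneg hm0 _
  set q2 : ℝ := (rr / ρr) ^ 2 with hq2_def
  have hq20 : (0:ℝ) ≤ q2 := by positivity
  have hq21 : q2 < 1 := by
    have hlt : rr / ρr < 1 := (div_lt_one hρr).mpr hr'ρ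
    exact pow_lt_one₀ (by positivity) hlt two_ne_zero
  have hBsum : Summable (fun k : ℕ => ‖m‖ * q2 ^ (k + 1)) := by
    have hgeo := summable_geometric_of_lt_one hq20 hq21
    have h' := hgeo.mul_left (‖m‖ * q2)
    refine h'.congr fun k => ?_
    rw [pow_succ']
    ring
  obtain ⟨N, hN⟩ := Filter.eventually_atTop.mp (aux_pow_le a hr'1)
  have hGnorm : ∀ k, ‖G k‖ ≤ ‖w (k+1)‖ * ‖m‖ * ‖w (k+1)‖ := by
    intro k
    calc ‖G k‖ = ‖star (w (k+1)) * m * w (k+1)‖ := rfl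
      _ ≤ ‖star (w (k+1)) * m‖ * ‖w (k+1)‖ := norm_mul_le _ _
      _ ≤ ‖star (w (k+1))‖ * ‖m‖ * ‖w (k+1)‖ :=
          mul_le_mul_of_nonneg_right (norm_mul_le _ _) (norm_nonneg _)
      _ = ‖w (k+1)‖ * ‖m‖ * ‖w (k+1)‖ := by rw [norm_star]
  have hwb : ∀ j, N ≤ j → ‖w j‖ ≤ (rr / ρr) ^ j := by
    intro j hj
    have haj : ‖a ^ j‖ ≤ rr ^ j := by
      have h' := hN j hj
      calc ‖a ^ j‖ = ((‖a ^ j‖₊ : ℝ)) := (coe_nnnorm _).symm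
        _ ≤ ((r' ^ j : ℝ≥0) : ℝ) := by exact_mod_cast h'
        _ = rr ^ j := by push_cast; rfl
    calc ‖w j‖ = ‖(ρr⁻¹ ^ j) • a ^ j‖ := rfl
      _ = |ρr⁻¹ ^ j| * ‖a ^ j‖ := by rw [norm_smul, Real.norm_eq_abs]
      _ = ρr⁻¹ ^ j * ‖a ^ j‖ := by rw [abs_of_nonneg (by positivity)]
      _ ≤ ρr⁻¹ ^ j * rr ^ j := by
          exact mul_le_mul_of_nonneg_left haj (by positivity)
      _ = (rr / ρr) ^ j := by rw [div_pow, div_eq_mul_inv, ← inv_pow]; ring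
  have hGsum : Summable G := by
    apply Summable.of_norm_bounded_eventually_nat hBsum
    filter_upwards [Filter.eventually_ge_atTop N] with k hk
    calc ‖G k‖ ≤ ‖w (k+1)‖ * ‖m‖ * ‖w (k+1)‖ := hGnorm k
      _ ≤ (rr/ρr)^(k+1) * ‖m‖ * (rr/ρr)^(k+1) := by
          have hb := hwb (k+1) (le_trans hk (Nat.le_succ k))
          have h1 : ‖w (k+1)‖ * ‖m‖ ≤ (rr/ρr)^(k+1) * ‖m‖ :=
            mul_le_mul_of_nonneg_right hb (norm_nonneg _)
          calc ‖w (k+1)‖ * ‖m‖ * ‖w (k+1)‖ ≤ (rr/ρr)^(k+1) * ‖m‖ * ‖w (k+1)‖ :=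
                mul_le_mul_of_nonneg_right h1 (norm_nonneg _)
            _ ≤ (rr/ρr)^(k+1) * ‖m‖ * (rr/ρr)^(k+1) := by
                refine mul_le_mul_of_nonneg_left hb ?_
                positivity
      _ = ‖m‖ * q2 ^ (k+1) := by rw [hq2_def, ← pow_mul, mul_comm 2 (k+1), pow_mul]; ring
  set d : A := ∑' k, G k with hd_def
  have hd0 : 0 ≤ d := tsum_nonneg fun k => hF0 (k+1)
  have hdsa : IsSelfAdjoint d := .of_nonneg hd0
  have hπG : ∀ k, π (G k) = 0 := by
    intro k
    have : π (G k) = star (π (w (k+1))) * π m * π (w (k+1)) := by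
      simp [hG_def, hF_def, map_mul, map_star]
    rw [this, hπm, mul_zero, zero_mul]
  have hπd : π d = 0 := by
    have h1 : HasSum (fun k => π (G k)) (π d) :=
      hGsum.hasSum.map (AddMonoidHomClass.toAddMonoidHom π) (map_continuous π)
    have h2 : HasSum (fun _ : ℕ => (0:B)) (π d) :=
      (funext hπG : (fun k => π (G k)) = fun _ => (0:B)) ▸ h1
    simpa using h2.unique hasSum_zero
  -- the conjugation identity
  have hsmul2 : ∀ (t : ℝ) (x y z : A), (t • x) * y * (t • z) = (t*t) • (x * y * z) := by
    intros t x y z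
    simp [smul_mul_assoc, mul_smul_comm, smul_smul]
  have hFsc : ∀ j, F j = (ρr⁻¹ ^ j * ρr⁻¹ ^ j) • (star (a^j) * m * a^j) := by
    intro j
    have : F j = star ((ρr⁻¹ ^ j) • a ^ j) * m * ((ρr⁻¹ ^ j) • a ^ j) := by
      rw [hF_def, hw_def]
    rw [this, star_smul, star_trivial, hsmul2]
  have hstep : ∀ j, star a * (star (a^j) * m * a^j) * a = star (a^(j+1)) * m * a^(j+1) := by
    intro j
    rw [pow_succ, star_mul]
    noncomm_ring
  have hρrne : ρr ≠ 0 := hρr.ne'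
  have hconj : ∀ k, star a * (G k * a) = (ρr ^ 2) • G (k + 1) := by
    intro k
    have hGk : G k = F (k+1) := by rw [hG_def]
    have hGk1 : G (k+1) = F (k+2) := by rw [hG_def]
    rw [hGk, hGk1]
    calc star a * (F (k+1) * a)
        = star a * ((ρr⁻¹^(k+1) * ρr⁻¹^(k+1)) • (star (a^(k+1)) * m * a^(k+1)) * a) := by
          rw [hFsc (k+1)]
      _ = (ρr⁻¹^(k+1) * ρr⁻¹^(k+1)) • (star a * (star (a^(k+1)) * m * a^(k+1)) * a) := by
          rw [smul_mul_assoc, mul_smul_comm]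
          congr 1
          noncomm_ring
      _ = (ρr⁻¹^(k+1) * ρr⁻¹^(k+1)) • (star (a^(k+2)) * m * a^(k+2)) := by
          rw [hstep (k+1)]
      _ = (ρr^2) • F (k+2) := by
          rw [hFsc (k+2), smul_smul]
          congr 1
          have hi : ρr ^ 2 * (ρr⁻¹ * ρr⁻¹) = 1 := by
            rw [sq, mul_mul_mul_comm, mul_inv_cancel₀ hρrne, one_mul]
          linear_combination (-(ρr⁻¹^(k+1) * ρr⁻¹^(k+1))) * hi
  have hda : star a * d * a = (ρr ^ 2) • d - star a * m * a := by
    have e1 : d * a = ∑' k, G k * a := (hGsum.tsum_mul_right a).symm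
    have e2 : star a * ∑' k, (G k * a) = ∑' k, star a * (G k * a) :=
      ((hGsum.mul_right a).tsum_mul_left (star a)).symm
    have hz : d = G 0 + ∑' k, G (k + 1) := Summable.tsum_eq_zero_add hGsum
    have hshift : Summable (fun k => G (k+1)) := by
      exact (summable_nat_add_iff 1).mpr hGsum
    have hG0 : (ρr^2) • G 0 = star a * m * a := by
      have : G 0 = F 1 := by rw [hG_def]
      rw [this, hFsc 1, smul_smul, pow_one]
      have hsc : ρr^2 * (ρr⁻¹ * ρr⁻¹) = 1 := by field_simp
      rw [hsc, one_smul, pow_one]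
    calc star a * d * a = star a * (d * a) := by rw [mul_assoc]
      _ = ∑' k, star a * (G k * a) := by rw [e1, e2]
      _ = ∑' k, (ρr^2) • G (k+1) := tsum_congr hconj
      _ = (ρr^2) • ∑' k, G (k+1) := Summable.tsum_const_smul _ hshift
      _ = (ρr^2) • (d - G 0) := by
          congr 1
          rw [hz, add_sub_cancel_left]
      _ = (ρr ^ 2) • d - star a * m * a := by rw [smul_sub, hG0]
  have hxa : star a * ((1 + d) * a) ≤ (ρr^2) • (1 + d) := by
    have e : star a * ((1 + d) * a) = (star a * a - star a * m * a) + (ρr^2) • d := by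
      rw [add_mul, one_mul, mul_add, ← mul_assoc, hda]
      abel
    rw [e]
    have halg : algebraMap ℝ A sr ≤ algebraMap ℝ A (ρr^2) := by
      rw [← sub_nonneg, ← map_sub]
      exact alg_nonneg (by linarith)
    calc (star a * a - star a * m * a) + (ρr^2) • d
        ≤ algebraMap ℝ A sr + (ρr^2) • d := by gcongr
      _ ≤ algebraMap ℝ A (ρr^2) + (ρr^2) • d := by gcongr
      _ = (ρr^2) • (1 + d) := by
          rw [smul_add, Algebra.algebraMap_eq_smul_one]
  -- the invertible square root u of 1 + d
  have hsp : ∀ t ∈ spectrum ℝ d, 0 ≤ t := fun t ht => spectrum_nonneg_of_nonneg hd0 ht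
  set h : ℝ → ℝ := fun t => Real.sqrt (1 + t) with hh_def
  have hhc : Continuous h := Real.continuous_sqrt.comp (continuous_const.add continuous_id)
  set u : A := cfc h d with hu_def
  have hu_sa : IsSelfAdjoint u := cfc_predicate _ d
  have huu : u * u = 1 + d := by
    rw [hu_def, ← cfc_mul _ _ d hhc.continuousOn hhc.continuousOn]
    have e1 : cfc (fun t => h t * h t) d = cfc (fun t : ℝ => 1 + t) d :=
      cfc_congr fun t ht => Real.mul_self_sqrt (by linarith [hsp t ht])
    rw [e1, cfc_const_add 1 (fun t : ℝ => t) d continuous_id'.continuousOn, map_one,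
      cfc_id' ℝ d]
  have hu_unit : IsUnit u := by
    rw [hu_def]
    refine isUnit_cfc h d hhc.continuousOn hdsa ?_
    intro t ht
    have h1 : (0:ℝ) < 1 + t := by linarith [hsp t ht]
    exact (Real.sqrt_pos.mpr h1).ne'
  set U : Aˣ := hu_unit.unit with hU_def
  have hUu : (U : A) = u := hu_unit.unit_spec
  have hπu : π u = 1 := by
    have e1 : π u = cfc h (π d) :=
      StarAlgHom.map_cfc π h d hhc.continuousOn (map_continuous π) hdsa (hdsa.map π)
    rw [e1, hπd, show (0:B) = algebraMap ℝ B 0 by simp, cfc_algebraMap (0:ℝ) h]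
    simp [hh_def]
  have hUinv_star : star ((U⁻¹ : Aˣ) : A) = ((U⁻¹ : Aˣ) : A) := by
    have hm1 : (U : A) * ((U⁻¹ : Aˣ) : A) = 1 := U.mul_inv
    have e2 : star (((U⁻¹ : Aˣ) : A)) * (U : A) = 1 := by
      have e3 := congrArg star hm1
      rw [star_mul, star_one] at e3
      rwa [hUu, hu_sa.star_eq, ← hUu] at e3
    calc star ((U⁻¹ : Aˣ) : A) = star ((U⁻¹ : Aˣ) : A) * ((U : A) * ((U⁻¹ : Aˣ) : A)) := by
          rw [hm1, mul_one]
      _ = ((U⁻¹ : Aˣ) : A) := by rw [← mul_assoc, e2, one_mul]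
  -- the final estimate
  set y : A := u * a * ((U⁻¹ : Aˣ) : A) with hy_def
  have hsy : star y * y = star ((U⁻¹:Aˣ):A) * (star a * ((1 + d) * a)) * ((U⁻¹:Aˣ):A) := by
    rw [hy_def, ← huu]
    simp only [star_mul, hu_sa.star_eq, mul_assoc]
  have hle : star y * y ≤ algebraMap ℝ A (ρr^2) := by
    rw [hsy]
    calc star ((U⁻¹:Aˣ):A) * (star a * ((1 + d) * a)) * ((U⁻¹:Aˣ):A)
        ≤ star ((U⁻¹:Aˣ):A) * ((ρr^2) • (1 + d)) * ((U⁻¹:Aˣ):A) :=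
          star_left_conjugate_le_conjugate hxa _
      _ = (ρr^2) • (((U⁻¹:Aˣ):A) * (1 + d) * ((U⁻¹:Aˣ):A)) := by
          rw [hUinv_star, mul_smul_comm, smul_mul_assoc]
      _ = algebraMap ℝ A (ρr^2) := by
          rw [← huu, ← hUu]
          have e4 : ((U⁻¹:Aˣ):A) * ((U:A) * (U:A)) * ((U⁻¹:Aˣ):A) = 1 := by
            simp [mul_assoc]
          rw [e4, Algebra.algebraMap_eq_smul_one]
  have hyn : ‖y‖ ≤ ρr := by
    have h5 : ‖star y * y‖ ≤ ρr^2 :=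
      (CStarAlgebra.norm_le_iff_le_algebraMap _ (by positivity) (star_mul_self_nonneg y)).mpr hle
    rw [CStarRing.norm_star_mul_self] at h5
    nlinarith [norm_nonneg y, hρr]
  refine ⟨U, ?_, ?_⟩
  · rw [map_sub, map_one, hUu, hπu, sub_self]
  · rw [← NNReal.coe_le_coe, coe_nnnorm, hUu]
    exact hyn

end


/- STATEMENT 3: Let `A` be a unital C*-algebra, `I` a closed two-sided ideal of `A`, and
`a ∈ A`.  Then `max {r(a), ‖π(a)‖} = inf {‖(1+e) a (1+e)⁻¹‖ : e ∈ I, 1 + e invertible}`.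

The quotient C*-algebra `A/I` together with the canonical surjection `π : A → A/I` is
formalized as a surjective star algebra homomorphism `π : A →⋆ₐ[ℂ] B` onto a C*-algebra
`B`; the ideal `I` is then the kernel of `π`.  The elements `1 + e` with `e ∈ I` and
`1 + e` invertible are exactly the units `u` of `A` with `π (u - 1) = 0`, and the formula
is stated in `ℝ≥0∞` (where the spectral radius lives) using the norm `‖·‖₊`. -/
theorem stmt_3
    {A : Type*} [NormedRing A] [StarRing A] [CStarRing A] [CompleteSpace A]
    [NormedAlgebra ℂ A] [StarModule ℂ A]
    {B : Type*} [NormedRing B] [StarRing B] [CStarRing B] [CompleteSpace B]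
    [NormedAlgebra ℂ B] [StarModule ℂ B]
    (π : A →⋆ₐ[ℂ] B) (hπ : Function.Surjective π)
    (a : A) :
    max (spectralRadius ℂ a) (‖π a‖₊ : ℝ≥0∞)
      = ⨅ (u : Aˣ) (_ : π ((u : A) - 1) = 0),
          (‖(u : A) * a * ((u⁻¹ : Aˣ) : A)‖₊ : ℝ≥0∞) := by
  letI : CStarAlgebra A :=
    { ‹NormedRing A›, ‹StarRing A›, ‹CStarRing A›, ‹CompleteSpace A›, ‹NormedAlgebra ℂ A›,
      ‹StarModule ℂ A› with }
  letI : CStarAlgebra B :=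
    { ‹NormedRing B›, ‹StarRing B›, ‹CStarRing B›, ‹CompleteSpace B›, ‹NormedAlgebra ℂ B›,
      ‹StarModule ℂ B› with }
  obtain hA | hA := subsingleton_or_nontrivial A
  · have hsp : spectrum ℂ a = ∅ := by
      rw [Set.eq_empty_iff_forall_notMem]
      intro z hz
      exact (spectrum.mem_iff.mp hz) (isUnit_of_subsingleton _)
    have hLHS : spectralRadius ℂ a = 0 := by
      simp [spectralRadius, hsp]
    have hπa : π a = 0 := by rw [Subsingleton.elim a 0, map_zero]
    have hR : (⨅ (u : Aˣ) (_ : π ((u : A) - 1) = 0),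
        (‖(u : A) * a * ((u⁻¹ : Aˣ) : A)‖₊ : ℝ≥0∞)) = 0 := by
      apply le_antisymm _ zero_le
      refine iInf_le_of_le 1 (iInf_le_of_le ?_ ?_)
      · rw [Units.val_one, sub_self, map_zero]
      · rw [Subsingleton.elim (((1:Aˣ):A) * a * ((1⁻¹:Aˣ):A)) 0]
        simp
    rw [hLHS, hπa, hR]
    simp
  letI : PartialOrder A := CStarAlgebra.spectralOrder A
  haveI : StarOrderedRing A := CStarAlgebra.spectralOrderedRing A
  letI : PartialOrder B := CStarAlgebra.spectralOrder B
  haveI : StarOrderedRing B := CStarAlgebra.spectralOrderedRing B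
  apply le_antisymm
  · refine le_iInf fun u => le_iInf fun hu => ?_
    have hπu : π (u : A) = 1 := by
      have h' := hu
      rwa [map_sub, map_one, sub_eq_zero] at h'
    have hπuinv : π ((u⁻¹ : Aˣ) : A) = 1 := by
      have e : π ((u⁻¹ : Aˣ) : A) * π (u : A) = 1 := by
        rw [← map_mul, u.inv_mul, map_one]
      rwa [hπu, mul_one] at e
    apply max_le
    · have hs : spectralRadius ℂ a = spectralRadius ℂ ((u : A) * a * ((u⁻¹ : Aˣ) : A)) := by
        unfold spectralRadius
        rw [spectrum.units_conjugate]
      rw [hs]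
      exact spectrum.spectralRadius_le_nnnorm _
    · have hπa : π a = π ((u : A) * a * ((u⁻¹ : Aˣ) : A)) := by
        rw [map_mul, map_mul, hπu, hπuinv, one_mul, mul_one]
      rw [hπa]
      exact ENNReal.coe_le_coe.mpr (NonUnitalStarAlgHom.nnnorm_apply_le π _)
  · refine le_of_forall_gt_imp_ge_of_dense fun cc hcc => ?_
    obtain ⟨r, hr1, hr2⟩ := ENNReal.lt_iff_exists_nnreal_btwn.mp hcc
    rw [max_lt_iff] at hr1
    have h2' : ‖π a‖₊ < r := by exact_mod_cast hr1.2
    have hρpos : 0 < r := lt_of_le_of_lt zero_le h2'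
    obtain ⟨u, hu, hn⟩ := key π a r hρpos hr1.1 h2'
    refine le_trans (iInf_le_of_le u (iInf_le_of_le hu ?_)) hr2.le
    exact ENNReal.coe_le_coe.mpr hn
end

section
/- Let A be a unital C*-algebra and a, b ∈ A with ab = ba, r(a) < 1, and ‖b‖ ≤ 1. Then there exists an invertible element y ∈ A such that ‖y a y⁻¹‖ < 1 and ‖y b y⁻¹‖ ≤ 1. -/
open scoped ENNReal

theorem stmt_17
    {A : Type*} [NormedRing A] [StarRing A] [CStarRing A] [CompleteSpace A]
    [NormedAlgebra ℂ A] [StarModule ℂ A]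
    (a b : A) (hab : a * b = b * a)
    (hr : spectralRadius ℂ a < 1) (hb : ‖b‖ ≤ 1) :
    ∃ y : Aˣ, ‖(y : A) * a * ((y⁻¹ : Aˣ) : A)‖ < 1
      ∧ ‖(y : A) * b * ((y⁻¹ : Aˣ) : A)‖ ≤ 1 := by
  obtain hA | hA := subsingleton_or_nontrivial A
  · have h0 : ∀ x : A, x = 0 := fun x => Subsingleton.elim x 0
    refine ⟨1, ?_, ?_⟩ <;> rw [h0 (_ * _ * _)] <;> simp
  letI : CStarAlgebra A := {}
  letI := CStarAlgebra.spectralOrder A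
  haveI := CStarAlgebra.spectralOrderedRing A
  have halgmap : ∀ r : ℝ, 0 ≤ r → 0 ≤ algebraMap ℝ A r := by
    intro r hrr
    have h := star_mul_self_nonneg (algebraMap ℝ A (Real.sqrt r))
    rwa [(IsSelfAdjoint.algebraMap A (IsSelfAdjoint.all _)).star_eq, ← map_mul,
      Real.mul_self_sqrt hrr] at h
  -- summability
  have hpow : Summable (fun n : ℕ => ‖a ^ n‖ * ‖a ^ n‖) := by
    obtain ⟨r, hr1, hr2⟩ := ENNReal.lt_iff_exists_nnreal_btwn.mp hr
    have hr2' : (r : ℝ) < 1 := by exact_mod_cast hr2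
    have hr0 : (0:ℝ) ≤ r := r.coe_nonneg
    have hev : ∀ᶠ n : ℕ in Filter.atTop,
        (‖a ^ n‖₊ : ℝ≥0∞) ^ (1 / n : ℝ) < (r : ℝ≥0∞) :=
      (spectrum.pow_nnnorm_pow_one_div_tendsto_nhds_spectralRadius a).eventually_lt_const hr1
    have hev2 : ∀ᶠ n : ℕ in Filter.atTop, ‖a ^ n‖ ≤ (r : ℝ) ^ n := by
      filter_upwards [hev, Filter.eventually_ge_atTop 1] with n hn hn1
      have hne : (n : ℝ) ≠ 0 := by positivity
      have : (‖a ^ n‖₊ : ℝ≥0∞) ≤ (r : ℝ≥0∞) ^ (n : ℕ) := by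
        calc (‖a ^ n‖₊ : ℝ≥0∞) = ((‖a ^ n‖₊ : ℝ≥0∞) ^ (1 / n : ℝ)) ^ (n : ℝ) := by
              rw [← ENNReal.rpow_mul, one_div, inv_mul_cancel₀ hne, ENNReal.rpow_one]
          _ ≤ (r : ℝ≥0∞) ^ (n : ℝ) := ENNReal.rpow_le_rpow hn.le (by positivity)
          _ = (r : ℝ≥0∞) ^ (n : ℕ) := by rw [ENNReal.rpow_natCast]
      have h3 : ‖a ^ n‖₊ ≤ r ^ n := by exact_mod_cast this
      exact_mod_cast h3
    apply Summable.of_norm_bounded_eventually_nat (g := fun n => ((r:ℝ) * r) ^ n)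
    · exact summable_geometric_of_lt_one (by positivity) (by nlinarith)
    · filter_upwards [hev2] with n hn
      have h0 : (0:ℝ) ≤ ‖a ^ n‖ := norm_nonneg _
      rw [Real.norm_eq_abs, abs_of_nonneg (by positivity), mul_pow]
      exact mul_le_mul hn hn h0 (by positivity)
  set f : ℕ → A := fun n => star (a ^ n) * (a ^ n) with hf
  have hsumf : Summable f := by
    apply Summable.of_norm_bounded hpow
    intro n
    calc ‖star (a ^ n) * a ^ n‖ ≤ ‖star (a ^ n)‖ * ‖a ^ n‖ := norm_mul_le _ _
      _ = ‖a ^ n‖ * ‖a ^ n‖ := by rw [norm_star]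
  set T : A := ∑' n, f n with hT
  have hfnonneg : ∀ n, 0 ≤ f n := fun n => star_mul_self_nonneg _
  have hT0 : 0 ≤ T := tsum_nonneg hfnonneg
  have hTsa : IsSelfAdjoint T := .of_nonneg hT0
  have hf0 : f 0 = 1 := by simp [hf]
  have hshift : ∑' n, f (n + 1) = T - 1 := by
    have := Summable.tsum_eq_zero_add hsumf
    rw [hf0] at this
    rw [hT, this]; abel
  have hT1 : (1 : A) ≤ T := by
    have h1 : (0:A) ≤ ∑' n, f (n + 1) := tsum_nonneg (fun n => hfnonneg _)
    rw [hshift, sub_nonneg] at h1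
    exact h1
  have hTunit : IsUnit T := CStarAlgebra.isUnit_of_le 1 hT1
  -- key identity for a
  have hkeya : star a * T * a = T - 1 := by
    rw [hT, ← hsumf.tsum_mul_left, ← (hsumf.mul_left (star a)).tsum_mul_right, ← hshift]
    congr 1 with n
    simp only [hf, pow_succ, star_mul, mul_assoc]
  -- key inequality for b
  have hb1 : star b * b ≤ (1 : A) := by
    calc star b * b ≤ algebraMap ℝ A (‖b‖ ^ 2) := CStarAlgebra.star_mul_le_algebraMap_norm_sq
      _ ≤ 1 := by
          rw [← map_one (algebraMap ℝ A), ← sub_nonneg, ← map_sub]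
          exact halgmap _ (by nlinarith [norm_nonneg b])
  have hsumfb : Summable (fun n => star b * f n * b) :=
    (hsumf.mul_left (star b)).mul_right b
  have hkeyb : star b * T * b ≤ T := by
    rw [hT, ← hsumf.tsum_mul_left, ← (hsumf.mul_left (star b)).tsum_mul_right]
    refine Summable.tsum_le_tsum (fun n => ?_) hsumfb hsumf
    have hC : Commute a b := hab
    have hcomm : a ^ n * b = b * a ^ n := hC.pow_left n
    calc star b * f n * b = star (a ^ n) * (star b * b) * a ^ n := by
          rw [hf]
          calc star b * (star (a ^ n) * a ^ n) * b
              = star (a ^ n * b) * (a ^ n * b) := by simp [star_mul, mul_assoc]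
            _ = star (b * a ^ n) * (b * a ^ n) := by rw [hcomm]
            _ = star (a ^ n) * (star b * b) * a ^ n := by simp [star_mul, mul_assoc]
      _ ≤ star (a ^ n) * 1 * a ^ n := star_left_conjugate_le_conjugate hb1 _
      _ = f n := by rw [mul_one]
  -- the square root
  set y0 : A := CFC.sqrt T with hy0
  have hy0nonneg : 0 ≤ y0 := CFC.sqrt_nonneg T
  have hy0sa : IsSelfAdjoint y0 := .of_nonneg hy0nonneg
  have hy0sq : y0 * y0 = T := CFC.sqrt_mul_sqrt_self T hT0
  have hy0unit : IsUnit y0 := by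
    have h := hTunit
    rw [← hy0sq] at h
    exact ((Commute.refl y0).isUnit_mul_iff.mp h).1
  have hyu_coe : (hy0unit.unit : A) = y0 := hy0unit.unit_spec
  set yi : A := ((hy0unit.unit⁻¹ : Aˣ) : A) with hyi
  have hinv1 : yi * y0 = 1 := hy0unit.val_inv_mul
  have hinv2 : y0 * yi = 1 := hy0unit.mul_val_inv
  have hyi0 : (0:A) ≤ yi :=
    CFC.inv_nonneg_of_nonneg hy0unit.unit (by rw [hy0unit.unit_spec]; exact hy0nonneg)
  have hyisa : IsSelfAdjoint yi := .of_nonneg hyi0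
  have hTconj : yi * T * yi = 1 := by
    rw [← hy0sq]
    calc yi * (y0 * y0) * yi = (yi * y0) * (y0 * yi) := by simp [mul_assoc]
      _ = 1 := by rw [hinv1, hinv2, one_mul]
  have hconj : ∀ x : A, star (y0 * x * yi) * (y0 * x * yi)
      = yi * (star x * T * x) * yi := by
    intro x
    have h : y0 * (y0 * (x * yi)) = T * (x * yi) := by rw [← mul_assoc, hy0sq]
    simp only [star_mul, hyisa.star_eq, hy0sa.star_eq, mul_assoc, h]
  refine ⟨hy0unit.unit, ?_, ?_⟩
  · -- goal for a
    rw [hyu_coe]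
    have h2 : star (y0 * a * yi) * (y0 * a * yi) = 1 - yi * yi := by
      rw [hconj a, hkeya, mul_sub, mul_one, sub_mul, hTconj]
    have ht1 : (1:ℝ) ≤ ‖T‖ := by
      calc (1:ℝ) = ‖(1:A)‖ := by rw [norm_one]
        _ ≤ ‖T‖ := CStarAlgebra.norm_le_norm_of_nonneg_of_le zero_le_one hT1
    have htpos : (0:ℝ) < ‖T‖ := lt_of_lt_of_le one_pos ht1
    have h3 : (1:A) ≤ algebraMap ℝ A ‖T‖ * (yi * yi) := by
      have h := hyisa.conjugate_le_conjugate hTsa.le_algebraMap_norm_self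
      rw [hTconj] at h
      calc (1:A) ≤ yi * algebraMap ℝ A ‖T‖ * yi := h
        _ = algebraMap ℝ A ‖T‖ * (yi * yi) := by
            rw [← Algebra.commutes ‖T‖ yi, mul_assoc]
    have h4 : algebraMap ℝ A (‖T‖⁻¹) ≤ yi * yi := by
      have hg := (IsSelfAdjoint.algebraMap A
        (IsSelfAdjoint.all (Real.sqrt ‖T‖⁻¹))).conjugate_le_conjugate h3
      have hsc : Real.sqrt ‖T‖⁻¹ * ‖T‖ * Real.sqrt ‖T‖⁻¹ = 1 := by
        rw [mul_comm (Real.sqrt ‖T‖⁻¹) ‖T‖, mul_assoc,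
          Real.mul_self_sqrt (by positivity), mul_inv_cancel₀ htpos.ne']
      have hgs : algebraMap ℝ A (Real.sqrt ‖T‖⁻¹) * (algebraMap ℝ A ‖T‖ * (yi * yi))
          * algebraMap ℝ A (Real.sqrt ‖T‖⁻¹) = yi * yi := by
        rw [← mul_assoc (algebraMap ℝ A (Real.sqrt ‖T‖⁻¹)), ← map_mul, mul_assoc,
          ← Algebra.commutes (Real.sqrt ‖T‖⁻¹) (yi * yi), ← mul_assoc, ← map_mul,
          hsc, map_one, one_mul]
      calc algebraMap ℝ A (‖T‖⁻¹)
          = algebraMap ℝ A (Real.sqrt ‖T‖⁻¹) * 1 * algebraMap ℝ A (Real.sqrt ‖T‖⁻¹) := by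
            rw [mul_one, ← map_mul, Real.mul_self_sqrt (by positivity)]
        _ ≤ algebraMap ℝ A (Real.sqrt ‖T‖⁻¹) * (algebraMap ℝ A ‖T‖ * (yi * yi))
            * algebraMap ℝ A (Real.sqrt ‖T‖⁻¹) := hg
        _ = yi * yi := hgs
    have h5 : star (y0 * a * yi) * (y0 * a * yi) ≤ algebraMap ℝ A (1 - ‖T‖⁻¹) := by
      rw [h2, map_sub, map_one]
      exact sub_le_sub_left h4 1
    have hpos : (0:ℝ) ≤ 1 - ‖T‖⁻¹ := by
      have hle : ‖T‖⁻¹ ≤ 1 := by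
        rw [inv_le_one_iff₀]; right; exact ht1
      linarith
    have h6 := (CStarAlgebra.norm_le_iff_le_algebraMap _ hpos
      (star_mul_self_nonneg _)).mpr h5
    rw [CStarRing.norm_star_mul_self] at h6
    have hinvpos : (0:ℝ) < ‖T‖⁻¹ := by positivity
    nlinarith [norm_nonneg (y0 * a * yi)]
  · -- goal for b
    rw [hyu_coe]
    have h2 : star (y0 * b * yi) * (y0 * b * yi) ≤ 1 := by
      rw [hconj b]
      calc yi * (star b * T * b) * yi ≤ yi * T * yi :=
            hyisa.conjugate_le_conjugate hkeyb
        _ = 1 := hTconj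
    have h6 := (CStarAlgebra.norm_le_one_iff_of_nonneg _
      (star_mul_self_nonneg _)).mpr h2
    rw [CStarRing.norm_star_mul_self] at h6
    nlinarith [norm_nonneg (y0 * b * yi)]
end

section
/- Let A be a unital C*-algebra and a, b ∈ A with ab = ba. Suppose a is similar to a strict contraction (there exists an invertible s ∈ A with ‖s a s⁻¹‖ < 1) and b is similar to a contraction (there exists an invertible t ∈ A with ‖t b t⁻¹‖ ≤ 1). Then there exists a single invertible element c ∈ A such that ‖c a c⁻¹‖ ≤ 1 and ‖c b c⁻¹‖ ≤ 1. -/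
open scoped ENNReal

private lemma aux_sqrt_unit {A : Type*} [CStarAlgebra A] [PartialOrder A] [StarOrderedRing A]
    (h : A) (hpos : 0 ≤ h) (hu : IsUnit h) :
    ∃ c : Aˣ, ∀ x : A, star x * h * x ≤ h → ‖(c : A) * x * ((c⁻¹ : Aˣ) : A)‖ ≤ 1 := by
  set c0 := CFC.sqrt h with hc0
  have hc0n : 0 ≤ c0 := CFC.sqrt_nonneg h
  have hsc0 : star c0 = c0 := IsSelfAdjoint.of_nonneg hc0n
  have hc0sq : c0 * c0 = h := CFC.sqrt_mul_sqrt_self h hpos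
  obtain ⟨u, hu'⟩ := hu
  set d : A := c0 * ↑u⁻¹ with hd
  have hcd : c0 * d = 1 := by rw [hd, ← mul_assoc, hc0sq, ← hu', u.mul_inv]
  have h2 : (↑u⁻¹ * c0 : A) * c0 = 1 := by rw [mul_assoc, hc0sq, ← hu', u.inv_mul]
  have h3 : (↑u⁻¹ * c0 : A) = d := by
    calc (↑u⁻¹ * c0 : A) = (↑u⁻¹ * c0) * (c0 * d) := by rw [hcd, mul_one]
    _ = ((↑u⁻¹ * c0 : A) * c0) * d := by simp only [mul_assoc]
    _ = d := by rw [h2, one_mul]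
  have hdc : d * c0 = 1 := by rw [← h3]; exact h2
  have hds : star d = d := by
    have h4 : star d * c0 = 1 := by rw [← hsc0, ← star_mul, hcd, star_one]
    calc star d = star d * (c0 * d) := by rw [hcd, mul_one]
    _ = (star d * c0) * d := by rw [mul_assoc]
    _ = d := by rw [h4, one_mul]
  refine ⟨⟨c0, d, hcd, hdc⟩, fun x hx => ?_⟩
  show ‖c0 * x * d‖ ≤ 1
  have key : star (c0 * x * d) * (c0 * x * d) ≤ 1 := by
    have h5 : star (c0 * x * d) * (c0 * x * d) = d * (star x * h * x) * d := by
      rw [← hc0sq]; simp only [star_mul, hds, hsc0, mul_assoc]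
    rw [h5]
    calc d * (star x * h * x) * d ≤ d * h * d := by
          have := star_left_conjugate_le_conjugate hx d; rwa [hds] at this
    _ = (d * c0) * (c0 * d) := by rw [← hc0sq]; simp only [mul_assoc]
    _ = 1 := by rw [hdc, hcd, one_mul]
  have hnn : 0 ≤ star (c0 * x * d) * (c0 * x * d) := star_mul_self_nonneg _
  have h6 := (CStarAlgebra.norm_le_one_iff_of_nonneg _ hnn).mpr key
  rw [CStarRing.norm_star_mul_self] at h6
  nlinarith [norm_nonneg (c0 * x * d)]

private lemma aux_summable {A : Type*} [CStarAlgebra A] [Nontrivial A]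
    (a : A) (s : Aˣ) (hs : ‖(s : A) * a * ((s⁻¹ : Aˣ) : A)‖ < 1) (m : A) :
    Summable (fun n : ℕ => star (a ^ n) * m * a ^ n) := by
  set r := ‖(s : A) * a * ((s⁻¹ : Aˣ) : A)‖ with hr
  have hr0 : 0 ≤ r := norm_nonneg _
  set C := ‖((s⁻¹ : Aˣ) : A)‖ * ‖(s : A)‖ with hC
  have hC0 : 0 ≤ C := mul_nonneg (norm_nonneg _) (norm_nonneg _)
  have hpow : ∀ n : ℕ, ‖a ^ n‖ ≤ C * r ^ n := by
    intro n
    have e : a ^ n = ↑s⁻¹ * (((s : A) * a * ↑s⁻¹) ^ n) * ↑s := by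
      rw [s.conj_pow]; simp [mul_assoc]
    calc ‖a ^ n‖ = ‖(↑s⁻¹ : A) * (((s : A) * a * ↑s⁻¹) ^ n) * ↑s‖ := by rw [← e]
    _ ≤ ‖(↑s⁻¹ : A) * (((s : A) * a * ↑s⁻¹) ^ n)‖ * ‖(s : A)‖ := norm_mul_le _ _
    _ ≤ (‖(↑s⁻¹ : A)‖ * ‖(((s : A) * a * ↑s⁻¹) ^ n)‖) * ‖(s : A)‖ := by
        gcongr; exact norm_mul_le _ _
    _ ≤ (‖(↑s⁻¹ : A)‖ * r ^ n) * ‖(s : A)‖ := by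
        gcongr; exact norm_pow_le _ n
    _ = C * r ^ n := by ring
  have hrr : r * r < 1 := by nlinarith
  refine Summable.of_norm_bounded
    ((summable_geometric_of_lt_one (mul_nonneg hr0 hr0) hrr).mul_left (C * C * ‖m‖)) fun n => ?_
  calc ‖star (a ^ n) * m * a ^ n‖ ≤ ‖star (a ^ n) * m‖ * ‖a ^ n‖ := norm_mul_le _ _
  _ ≤ (‖star (a ^ n)‖ * ‖m‖) * ‖a ^ n‖ := by gcongr; exact norm_mul_le _ _
  _ = (‖a ^ n‖ * ‖m‖) * ‖a ^ n‖ := by rw [norm_star]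
  _ ≤ ((C * r ^ n) * ‖m‖) * (C * r ^ n) := by
      gcongr <;> exact hpow n
  _ = (C * C * ‖m‖) * (r * r) ^ n := by rw [mul_pow]; ring

theorem stmt_18
    {A : Type*} [NormedRing A] [StarRing A] [CStarRing A] [CompleteSpace A]
    [NormedAlgebra ℂ A] [StarModule ℂ A]
    (a b : A) (hab : a * b = b * a)
    (ha : ∃ s : Aˣ, ‖(s : A) * a * ((s⁻¹ : Aˣ) : A)‖ < 1)
    (hb : ∃ t : Aˣ, ‖(t : A) * b * ((t⁻¹ : Aˣ) : A)‖ ≤ 1) :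
    ∃ c : Aˣ, ‖(c : A) * a * ((c⁻¹ : Aˣ) : A)‖ ≤ 1
      ∧ ‖(c : A) * b * ((c⁻¹ : Aˣ) : A)‖ ≤ 1 := by
  letI : CStarAlgebra A := ⟨⟩
  rcases subsingleton_or_nontrivial A with hS | hN
  · have htriv : ∀ x : A, ‖x‖ ≤ 1 := fun x => by
      rw [Subsingleton.elim x 0, norm_zero]; exact zero_le_one
    exact ⟨1, htriv _, htriv _⟩
  letI := CStarAlgebra.spectralOrder A
  haveI := CStarAlgebra.spectralOrderedRing A
  obtain ⟨s, hs⟩ := ha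
  obtain ⟨t, ht⟩ := hb
  set k : A := star (t : A) * (t : A) with hk
  have hk0 : 0 ≤ k := star_mul_self_nonneg _
  have hkU : IsUnit k := (t.isUnit.star).mul t.isUnit
  set f : ℕ → A := fun n => star (a ^ n) * k * a ^ n with hf
  have hsum : Summable f := aux_summable a s hs k
  set h : A := ∑' n, f n with hh
  have hf0 : ∀ n, 0 ≤ f n := fun n => star_left_conjugate_nonneg hk0 _
  have hh0 : 0 ≤ h := tsum_nonneg hf0
  have hC : Commute a b := hab
  -- shift identity for a
  have hshift : star a * h * a = ∑' n, f (n + 1) := by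
    calc star a * h * a = ∑' n, star a * f n * a := by
          rw [hh, ← hsum.tsum_mul_left (star a), ← (hsum.mul_left (star a)).tsum_mul_right a]
    _ = ∑' n, f (n + 1) := by
          refine tsum_congr fun n => ?_
          simp only [hf, pow_succ, star_mul, mul_assoc]
  have hdecomp : h = k + ∑' n, f (n + 1) := by
    have h0 := Summable.tsum_eq_zero_add hsum
    have hf0' : f 0 = k := by simp [hf]
    rw [hh, h0, hf0']
  have htail0 : 0 ≤ ∑' n, f (n + 1) := tsum_nonneg fun n => hf0 _
  have hkh : k ≤ h := by rw [hdecomp]; exact le_add_of_nonneg_right htail0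
  have hhU : IsUnit h := CStarAlgebra.isUnit_of_le k hkh (hkU.unit.isStrictlyPositive_iff.mpr hk0)
  have haha : star a * h * a ≤ h := by
    rw [hshift, hdecomp]; exact le_add_of_nonneg_left hk0
  -- inequality for b
  have hbk : star b * k * b ≤ k := by
    set y : A := (t : A) * b * ↑t⁻¹ with hy
    have hy0 : 0 ≤ star y * y := star_mul_self_nonneg y
    have hy1 : star y * y ≤ 1 := by
      rw [← CStarAlgebra.norm_le_one_iff_of_nonneg _ hy0, CStarRing.norm_star_mul_self]
      nlinarith [norm_nonneg y, ht]
    have e1 : y * (t : A) = (t : A) * b := by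
      rw [hy, mul_assoc]; simp
    calc star b * k * b = star (y * (t : A)) * (y * (t : A)) := by
          rw [e1, hk]; simp only [star_mul, mul_assoc]
    _ = star (t : A) * (star y * y) * (t : A) := by simp only [star_mul, mul_assoc]
    _ ≤ star (t : A) * 1 * (t : A) := star_left_conjugate_le_conjugate hy1 _
    _ = k := by rw [mul_one]
  have hterm : ∀ n, star b * f n * b ≤ f n := by
    intro n
    have hcn : a ^ n * b = b * a ^ n := (hC.pow_left n).eq
    have hcns : star b * star (a ^ n) = star (a ^ n) * star b := by
      rw [← star_mul, hcn, star_mul]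
    have e2 : star b * f n * b = star (a ^ n) * (star b * k * b) * a ^ n := by
      simp only [hf, ← mul_assoc]
      rw [hcns, mul_assoc _ (a ^ n) b, hcn, ← mul_assoc]
    rw [e2]
    exact star_left_conjugate_le_conjugate hbk _
  have hsum' : Summable (fun n => star b * f n * b) := by
    have : (fun n => star b * f n * b) = fun n : ℕ => star (a ^ n) * (star b * k * b) * a ^ n := by
      funext n
      have hcn : a ^ n * b = b * a ^ n := (hC.pow_left n).eq
      have hcns : star b * star (a ^ n) = star (a ^ n) * star b := by
        rw [← star_mul, hcn, star_mul]
      simp only [hf, ← mul_assoc]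
      rw [hcns, mul_assoc _ (a ^ n) b, hcn, ← mul_assoc]
    rw [this]
    exact aux_summable a s hs _
  have hbhb : star b * h * b ≤ h := by
    calc star b * h * b = ∑' n, star b * f n * b := by
          rw [hh, ← hsum.tsum_mul_left (star b), ← (hsum.mul_left (star b)).tsum_mul_right b]
    _ ≤ ∑' n, f n := Summable.tsum_le_tsum hterm hsum' hsum
    _ = h := hh.symm
  obtain ⟨c, hc⟩ := aux_sqrt_unit h hh0 hhU
  exact ⟨c, hc a haha, hc b hbhb⟩
end
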